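/- arXiv:2409.06581 — 5 statements merged into one kernel-verified Lean document; each statement's English description precedes it below -/
import Mathlib

section
/- For every uniformly elliptic nearest-neighbor environment ω on ℤ^d with ellipticity constant κ and every u > 0, the function G_{u,ω} is well defined, nonnegative and finite: 0 ≤ G_{u,ω}(t,x,y) < ∞ for all t ≥ 0 and x, y ∈ ℤ^d; moreover it is Lipschitz with constant u + log(1/κ): for all t ≥ 0, t' ∈ ℝ with t + t' ≥ 0, and all x, x', y, y' ∈ ℤ^d, |G_{u,ω}(t+t', x+x', y+y') − G_{u,ω}(t, x, y)| ≤ (u + log(1/κ)) · (|t'| + |x'|₁ + |y'|₁). -/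
/-- The set of the `2d` unit vectors of `ℤ^d`. -/
def unitVecs (d : ℕ) : Finset (Fin d → ℤ) :=
  (Finset.univ.image fun i : Fin d => fun j => if j = i then (1 : ℤ) else 0) ∪
  (Finset.univ.image fun i : Fin d => fun j => if j = i then (-1 : ℤ) else 0)

/-- Quenched `n`-step transition probabilities of the random walk in environment `ω`. -/
noncomputable def qtp (d : ℕ) (ω : (Fin d → ℤ) → (Fin d → ℤ) → ℝ) :
    ℕ → (Fin d → ℤ) → (Fin d → ℤ) → ℝ
  | 0, x, y => if x = y then 1 else 0
  | n + 1, x, y => ∑ e ∈ unitVecs d, ω x e * qtp d ω n (x + e) y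

/-- The ℓ¹-norm of a point of `ℤ^d`, as a natural number. -/
def l1 {d : ℕ} (x : Fin d → ℤ) : ℕ := ∑ i, (x i).natAbs

/-- `G_{u,ω}(t,x,y) := - log sup_n { e^{-u |n - t|} p_n(x,y) }`. -/
noncomputable def Gfun (d : ℕ) (ω : (Fin d → ℤ) → (Fin d → ℤ) → ℝ)
    (u t : ℝ) (x y : Fin d → ℤ) : ℝ :=
  - Real.log (⨆ n : ℕ, Real.exp (-u * |(n : ℝ) - t|) * qtp d ω n x y)

/-- The supremum inside `Gfun`. -/
noncomputable def Sfun (d : ℕ) (ω : (Fin d → ℤ) → (Fin d → ℤ) → ℝ)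
    (u t : ℝ) (x y : Fin d → ℤ) : ℝ :=
  ⨆ n : ℕ, Real.exp (-u * |(n : ℝ) - t|) * qtp d ω n x y

lemma Gfun_eq (d : ℕ) (ω : (Fin d → ℤ) → (Fin d → ℤ) → ℝ)
    (u t : ℝ) (x y : Fin d → ℤ) :
    Gfun d ω u t x y = - Real.log (Sfun d ω u t x y) := rfl

lemma neg_mem_unitVecs {d : ℕ} {e : Fin d → ℤ} (he : e ∈ unitVecs d) :
    -e ∈ unitVecs d := by
  simp only [unitVecs, Finset.mem_union, Finset.mem_image, Finset.mem_univ, true_and] at he ⊢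
  rcases he with ⟨i, hi⟩ | ⟨i, hi⟩
  · right; refine ⟨i, ?_⟩; rw [← hi]; funext j; simp only [Pi.neg_apply]; split <;> norm_num
  · left; refine ⟨i, ?_⟩; rw [← hi]; funext j; simp only [Pi.neg_apply]; split <;> norm_num

lemma exists_unit_step {d : ℕ} {z : Fin d → ℤ} (hz : z ≠ 0) :
    ∃ e ∈ unitVecs d, l1 (z - e) + 1 = l1 z := by
  obtain ⟨i, hi⟩ : ∃ i, z i ≠ 0 := by
    by_contra h; push_neg at h; exact hz (funext h)
  set s : ℤ := if 0 < z i then 1 else -1 with hs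
  refine ⟨fun j => if j = i then s else 0, ?_, ?_⟩
  · simp only [unitVecs, Finset.mem_union, Finset.mem_image, Finset.mem_univ, true_and]
    by_cases h : 0 < z i
    · left; exact ⟨i, by simp [hs, h]⟩
    · right; exact ⟨i, by simp [hs, h]⟩
  · unfold l1
    rw [← Finset.sum_erase_add _ _ (Finset.mem_univ i),
      ← Finset.sum_erase_add _ _ (Finset.mem_univ i)]
    have h1 : ∀ j ∈ Finset.univ.erase i,
        ((z - fun k => if k = i then s else 0) j).natAbs = (z j).natAbs := by
      intro j hj
      have hji : j ≠ i := Finset.ne_of_mem_erase hj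
      simp [hji]
    rw [Finset.sum_congr rfl h1]
    have h2 : ((z - fun k => if k = i then s else 0) i).natAbs + 1 = (z i).natAbs := by
      simp only [Pi.sub_apply, if_pos rfl, hs]
      split_ifs with h <;> omega
    omega

lemma l1_eq_zero {d : ℕ} {z : Fin d → ℤ} (h : l1 z = 0) : z = 0 := by
  funext i
  have := Finset.sum_eq_zero_iff.mp h i (Finset.mem_univ i)
  simpa [Int.natAbs_eq_zero] using this

section

variable {d : ℕ} {ω : (Fin d → ℤ) → (Fin d → ℤ) → ℝ} {κ : ℝ}

lemma qtp_nonneg (hκ0 : 0 < κ) (hell : ∀ x, ∀ e ∈ unitVecs d, κ ≤ ω x e) :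
    ∀ n x y, 0 ≤ qtp d ω n x y := by
  intro n
  induction n with
  | zero => intro x y; simp only [qtp]; split <;> norm_num
  | succ n ih =>
    intro x y; simp only [qtp]
    exact Finset.sum_nonneg fun e he => mul_nonneg (hκ0.le.trans (hell x e he)) (ih _ _)

lemma qtp_le_one (hκ0 : 0 < κ) (hell : ∀ x, ∀ e ∈ unitVecs d, κ ≤ ω x e)
    (hsum : ∀ x, ∑ e ∈ unitVecs d, ω x e = 1) :
    ∀ n x y, qtp d ω n x y ≤ 1 := by
  intro n
  induction n with
  | zero => intro x y; simp only [qtp]; split <;> norm_num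
  | succ n ih =>
    intro x y; simp only [qtp]
    calc ∑ e ∈ unitVecs d, ω x e * qtp d ω n (x + e) y
        ≤ ∑ e ∈ unitVecs d, ω x e * 1 :=
          Finset.sum_le_sum fun e he =>
            mul_le_mul_of_nonneg_left (ih _ _) (hκ0.le.trans (hell x e he))
      _ = 1 := by simpa using hsum x

lemma qtp_src_step (hκ0 : 0 < κ) (hell : ∀ x, ∀ e ∈ unitVecs d, κ ≤ ω x e)
    (n : ℕ) (x y : Fin d → ℤ) {e : Fin d → ℤ} (he : e ∈ unitVecs d) :
    κ * qtp d ω n (x + e) y ≤ qtp d ω (n + 1) x y := by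
  have h0 : 0 ≤ qtp d ω n (x + e) y := qtp_nonneg hκ0 hell n _ _
  calc κ * qtp d ω n (x + e) y
      ≤ ω x e * qtp d ω n (x + e) y := mul_le_mul_of_nonneg_right (hell x e he) h0
    _ ≤ ∑ e' ∈ unitVecs d, ω x e' * qtp d ω n (x + e') y :=
        Finset.single_le_sum (f := fun e' => ω x e' * qtp d ω n (x + e') y)
          (fun e' he' => mul_nonneg (hκ0.le.trans (hell x e' he')) (qtp_nonneg hκ0 hell n _ _)) he
    _ = qtp d ω (n + 1) x y := by simp [qtp]

lemma qtp_tgt_step (hκ0 : 0 < κ) (hell : ∀ x, ∀ e ∈ unitVecs d, κ ≤ ω x e) :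
    ∀ n (x y : Fin d → ℤ), ∀ e ∈ unitVecs d,
      κ * qtp d ω n x y ≤ qtp d ω (n + 1) x (y + e) := by
  intro n
  induction n with
  | zero =>
    intro x y e he
    by_cases hxy : x = y
    · subst hxy
      have : κ ≤ ∑ e' ∈ unitVecs d, ω x e' * qtp d ω 0 (x + e') (x + e) := by
        calc κ ≤ ω x e := hell x e he
          _ = ω x e * qtp d ω 0 (x + e) (x + e) := by simp [qtp]
          _ ≤ ∑ e' ∈ unitVecs d, ω x e' * qtp d ω 0 (x + e') (x + e) :=
              Finset.single_le_sum (f := fun e' => ω x e' * qtp d ω 0 (x + e') (x + e))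
                (fun e' he' => mul_nonneg (hκ0.le.trans (hell x e' he'))
                  (qtp_nonneg hκ0 hell 0 _ _)) he
      simpa [qtp] using this
    · have : qtp d ω 0 x y = 0 := by simp [qtp, hxy]
      rw [this, mul_zero]
      exact qtp_nonneg hκ0 hell 1 _ _
  | succ n ih =>
    intro x y e he
    have lhs : qtp d ω (n + 1) x y = ∑ e' ∈ unitVecs d, ω x e' * qtp d ω n (x + e') y := rfl
    have rhs : qtp d ω (n + 1 + 1) x (y + e)
        = ∑ e' ∈ unitVecs d, ω x e' * qtp d ω (n + 1) (x + e') (y + e) := rfl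
    rw [lhs, rhs, Finset.mul_sum]
    apply Finset.sum_le_sum
    intro e' he'
    calc κ * (ω x e' * qtp d ω n (x + e') y) = ω x e' * (κ * qtp d ω n (x + e') y) := by ring
      _ ≤ ω x e' * qtp d ω (n + 1) (x + e') (y + e) :=
          mul_le_mul_of_nonneg_left (ih (x + e') y e he) (hκ0.le.trans (hell x e' he'))

lemma qtp_reach (hκ0 : 0 < κ) (hell : ∀ x, ∀ e ∈ unitVecs d, κ ≤ ω x e) :
    ∀ m (x y : Fin d → ℤ), l1 (y - x) = m → ∃ n, κ ^ n ≤ qtp d ω n x y := by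
  intro m
  induction m with
  | zero =>
    intro x y h
    have hxy : y = x := by
      have := l1_eq_zero h
      have : y - x = 0 := this
      linear_combination (norm := abel) this
    exact ⟨0, by simp [qtp, hxy]⟩
  | succ m ih =>
    intro x y h
    have hz : y - x ≠ 0 := by
      intro h0; rw [h0] at h; simp [l1] at h
    obtain ⟨e, he, hstep⟩ := exists_unit_step hz
    have hll : l1 (y - (x + e)) = m := by
      have : y - (x + e) = y - x - e := by abel
      rw [this]; omega
    obtain ⟨n, hn⟩ := ih (x + e) y hll
    refine ⟨n + 1, ?_⟩
    calc κ ^ (n + 1) = κ * κ ^ n := by ring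
      _ ≤ κ * qtp d ω n (x + e) y := mul_le_mul_of_nonneg_left hn hκ0.le
      _ ≤ qtp d ω (n + 1) x y := qtp_src_step hκ0 hell n x y he

variable {u : ℝ}

lemma S_bdd (hκ0 : 0 < κ) (hell : ∀ x, ∀ e ∈ unitVecs d, κ ≤ ω x e)
    (hsum : ∀ x, ∑ e ∈ unitVecs d, ω x e = 1) (hu : 0 < u) (t : ℝ) (x y : Fin d → ℤ) :
    BddAbove (Set.range fun n : ℕ => Real.exp (-u * |(n : ℝ) - t|) * qtp d ω n x y) := by
  refine ⟨1, ?_⟩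
  rintro r ⟨n, rfl⟩
  have hle : -u * |(n : ℝ) - t| ≤ 0 := by
    have := mul_nonneg hu.le (abs_nonneg ((n : ℝ) - t))
    linarith
  exact mul_le_one₀ (Real.exp_le_one_iff.mpr hle)
    (qtp_nonneg hκ0 hell n x y) (qtp_le_one hκ0 hell hsum n x y)

lemma S_le_one (hκ0 : 0 < κ) (hell : ∀ x, ∀ e ∈ unitVecs d, κ ≤ ω x e)
    (hsum : ∀ x, ∑ e ∈ unitVecs d, ω x e = 1) (hu : 0 < u) (t : ℝ) (x y : Fin d → ℤ) :
    Sfun d ω u t x y ≤ 1 := by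
  refine ciSup_le fun n => ?_
  have hle : -u * |(n : ℝ) - t| ≤ 0 := by
    have := mul_nonneg hu.le (abs_nonneg ((n : ℝ) - t))
    linarith
  exact mul_le_one₀ (Real.exp_le_one_iff.mpr hle)
    (qtp_nonneg hκ0 hell n x y) (qtp_le_one hκ0 hell hsum n x y)

lemma S_pos (hκ0 : 0 < κ) (hell : ∀ x, ∀ e ∈ unitVecs d, κ ≤ ω x e)
    (hsum : ∀ x, ∑ e ∈ unitVecs d, ω x e = 1) (hu : 0 < u) (t : ℝ) (x y : Fin d → ℤ) :
    0 < Sfun d ω u t x y := by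
  obtain ⟨n, hn⟩ := qtp_reach hκ0 hell (l1 (y - x)) x y rfl
  have h1 : (0 : ℝ) < Real.exp (-u * |(n : ℝ) - t|) * κ ^ n := by positivity
  calc (0 : ℝ) < Real.exp (-u * |(n : ℝ) - t|) * κ ^ n := h1
    _ ≤ Real.exp (-u * |(n : ℝ) - t|) * qtp d ω n x y :=
        mul_le_mul_of_nonneg_left hn (Real.exp_pos _).le
    _ ≤ Sfun d ω u t x y := le_ciSup (S_bdd hκ0 hell hsum hu t x y) n

lemma abs_log_sub {a b c : ℝ} (ha : 0 < a) (hb : 0 < b)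
    (h1 : a ≤ Real.exp c * b) (h2 : b ≤ Real.exp c * a) : |Real.log a - Real.log b| ≤ c := by
  rw [abs_sub_le_iff]
  constructor
  · have := Real.log_le_log ha h1
    rw [Real.log_mul (Real.exp_ne_zero c) hb.ne', Real.log_exp] at this
    linarith
  · have := Real.log_le_log hb h2
    rw [Real.log_mul (Real.exp_ne_zero c) ha.ne', Real.log_exp] at this
    linarith

lemma S_time (hκ0 : 0 < κ) (hell : ∀ x, ∀ e ∈ unitVecs d, κ ≤ ω x e)
    (hsum : ∀ x, ∑ e ∈ unitVecs d, ω x e = 1) (hu : 0 < u) (t t' : ℝ) (x y : Fin d → ℤ) :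
    Sfun d ω u t' x y ≤ Real.exp (u * |t' - t|) * Sfun d ω u t x y := by
  refine ciSup_le fun n => ?_
  have htri : |(n : ℝ) - t| ≤ |t' - t| + |(n : ℝ) - t'| := by
    calc |(n : ℝ) - t| = |(t' - t) + ((n : ℝ) - t')| := by ring_nf
      _ ≤ |t' - t| + |(n : ℝ) - t'| := abs_add_le _ _
  have hexp : Real.exp (-u * |(n : ℝ) - t'|) ≤
      Real.exp (u * |t' - t|) * Real.exp (-u * |(n : ℝ) - t|) := by
    rw [← Real.exp_add]
    apply Real.exp_le_exp.mpr
    have h0 : 0 ≤ u * (|t' - t| + |(n : ℝ) - t'| - |(n : ℝ) - t|) :=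
      mul_nonneg hu.le (by linarith)
    nlinarith
  calc Real.exp (-u * |(n : ℝ) - t'|) * qtp d ω n x y
      ≤ (Real.exp (u * |t' - t|) * Real.exp (-u * |(n : ℝ) - t|)) * qtp d ω n x y :=
        mul_le_mul_of_nonneg_right hexp (qtp_nonneg hκ0 hell n x y)
    _ = Real.exp (u * |t' - t|) * (Real.exp (-u * |(n : ℝ) - t|) * qtp d ω n x y) := by ring
    _ ≤ Real.exp (u * |t' - t|) * Sfun d ω u t x y :=
        mul_le_mul_of_nonneg_left (le_ciSup (S_bdd hκ0 hell hsum hu t x y) n) (Real.exp_pos _).le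

lemma S_step (hκ0 : 0 < κ) (hell : ∀ x, ∀ e ∈ unitVecs d, κ ≤ ω x e)
    (hsum : ∀ x, ∑ e ∈ unitVecs d, ω x e = 1) (hu : 0 < u) (t : ℝ) (x y x' y' : Fin d → ℤ)
    (hq : ∀ n, κ * qtp d ω n x' y' ≤ qtp d ω (n + 1) x y) :
    Sfun d ω u t x' y' ≤ Real.exp (u + Real.log (1 / κ)) * Sfun d ω u t x y := by
  have hexpc : Real.exp (u + Real.log (1 / κ)) = Real.exp u * (1 / κ) := by
    rw [Real.exp_add, Real.exp_log (by positivity)]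
  refine ciSup_le fun n => ?_
  have h1 : qtp d ω n x' y' ≤ (1 / κ) * qtp d ω (n + 1) x y := by
    have h := hq n
    calc qtp d ω n x' y' = (1 / κ) * (κ * qtp d ω n x' y') := by field_simp
      _ ≤ (1 / κ) * qtp d ω (n + 1) x y :=
          mul_le_mul_of_nonneg_left h (by positivity)
  have h2 : Real.exp (-u * |(n : ℝ) - t|) ≤
      Real.exp u * Real.exp (-u * |((n + 1 : ℕ) : ℝ) - t|) := by
    rw [← Real.exp_add]
    apply Real.exp_le_exp.mpr
    push_cast
    have htri : |(n : ℝ) + 1 - t| ≤ |(n : ℝ) - t| + 1 := by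
      calc |(n : ℝ) + 1 - t| = |((n : ℝ) - t) + 1| := by ring_nf
        _ ≤ |(n : ℝ) - t| + |(1 : ℝ)| := abs_add_le _ _
        _ = |(n : ℝ) - t| + 1 := by norm_num
    have h0 : 0 ≤ u * (|(n : ℝ) - t| + 1 - |(n : ℝ) + 1 - t|) := mul_nonneg hu.le (by linarith)
    nlinarith
  calc Real.exp (-u * |(n : ℝ) - t|) * qtp d ω n x' y'
      ≤ (Real.exp u * Real.exp (-u * |((n + 1 : ℕ) : ℝ) - t|)) *
          ((1 / κ) * qtp d ω (n + 1) x y) :=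
        mul_le_mul h2 h1 (qtp_nonneg hκ0 hell n x' y') (by positivity)
    _ = (Real.exp u * (1 / κ)) *
          (Real.exp (-u * |((n + 1 : ℕ) : ℝ) - t|) * qtp d ω (n + 1) x y) := by ring
    _ ≤ (Real.exp u * (1 / κ)) * Sfun d ω u t x y :=
        mul_le_mul_of_nonneg_left (le_ciSup (S_bdd hκ0 hell hsum hu t x y) (n + 1))
          (by positivity)
    _ = Real.exp (u + Real.log (1 / κ)) * Sfun d ω u t x y := by rw [hexpc]

lemma lip_of_step {d : ℕ} (C : ℝ) (hC : 0 ≤ C) (F : (Fin d → ℤ) → ℝ)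
    (hstep : ∀ z, ∀ e ∈ unitVecs d, |F (z + e) - F z| ≤ C) :
    ∀ m (z' : Fin d → ℤ), l1 z' = m → ∀ z, |F (z + z') - F z| ≤ C * m := by
  intro m
  induction m with
  | zero =>
    intro z' h z
    have : z' = 0 := l1_eq_zero h
    simp [this]
  | succ m ih =>
    intro z' h z
    have hz' : z' ≠ 0 := by
      intro h0; rw [h0] at h; simp [l1] at h
    obtain ⟨e, he, hl⟩ := exists_unit_step hz'
    have h2 := ih (z' - e) (by omega) z
    have h3 := hstep (z + (z' - e)) e he
    have heq : z + (z' - e) + e = z + z' := by abel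
    rw [heq] at h3
    have habs : |F (z + z') - F z| ≤ |F (z + z') - F (z + (z' - e))| + |F (z + (z' - e)) - F z| :=
      abs_sub_le _ _ _
    push_cast
    calc |F (z + z') - F z| ≤ C + C * m := by linarith
      _ ≤ C * ((m : ℝ) + 1) := by ring_nf; linarith

end

theorem stmt2 (d : ℕ) (hd : 1 ≤ d) (κ : ℝ) (hκ0 : 0 < κ) (hκ1 : κ ≤ 1 / (2 * d))
    (ω : (Fin d → ℤ) → (Fin d → ℤ) → ℝ)
    (hell : ∀ x, ∀ e ∈ unitVecs d, κ ≤ ω x e)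
    (hsum : ∀ x, ∑ e ∈ unitVecs d, ω x e = 1)
    (u : ℝ) (hu : 0 < u) :
    -- well-definedness: the supremum is strictly positive (and the `ℝ`-valued
    -- supremum is automatically finite), so `G_{u,ω}` is well defined ...
    (∀ t : ℝ, 0 ≤ t → ∀ x y : Fin d → ℤ,
      0 < ⨆ n : ℕ, Real.exp (-u * |(n : ℝ) - t|) * qtp d ω n x y) ∧
    -- ... nonnegative and finite,
    (∀ t : ℝ, 0 ≤ t → ∀ x y : Fin d → ℤ, 0 ≤ Gfun d ω u t x y) ∧
    -- and Lipschitz with constant `u + log (1/κ)`.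
    (∀ t t' : ℝ, 0 ≤ t → 0 ≤ t + t' → ∀ x x' y y' : Fin d → ℤ,
      |Gfun d ω u (t + t') (x + x') (y + y') - Gfun d ω u t x y|
        ≤ (u + Real.log (1 / κ)) * (|t'| + (l1 x' : ℝ) + (l1 y' : ℝ))) := by
  have hκle1 : κ ≤ 1 := by
    have h2d : (2 : ℝ) ≤ 2 * d := by
      have : (1 : ℝ) ≤ d := by exact_mod_cast hd
      linarith
    have : (1 : ℝ) / (2 * d) ≤ 1 := by
      rw [div_le_one (by linarith)]; linarith
    linarith
  have hlog : 0 ≤ Real.log (1 / κ) := by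
    apply Real.log_nonneg
    rw [le_div_iff₀ hκ0, one_mul]
    exact hκle1
  set C : ℝ := u + Real.log (1 / κ) with hC
  have hC0 : 0 ≤ C := by positivity
  refine ⟨fun t _ x y => S_pos hκ0 hell hsum hu t x y, ?_, ?_⟩
  · intro t ht x y
    rw [Gfun_eq]
    have h1 := S_pos hκ0 hell hsum hu t x y
    have h2 := S_le_one hκ0 hell hsum hu t x y
    have := Real.log_nonpos h1.le h2
    linarith
  · intro t t' _ _ x x' y y'
    -- one-step estimates in space
    have Gstep_x : ∀ s : ℝ, ∀ y₀ : Fin d → ℤ, ∀ z, ∀ e ∈ unitVecs d,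
        |Gfun d ω u s (z + e) y₀ - Gfun d ω u s z y₀| ≤ C := by
      intro s y₀ z e he
      rw [Gfun_eq, Gfun_eq]
      have heq : |(- Real.log (Sfun d ω u s (z + e) y₀)) - (- Real.log (Sfun d ω u s z y₀))|
          = |Real.log (Sfun d ω u s (z + e) y₀) - Real.log (Sfun d ω u s z y₀)| := by
        rw [← abs_neg]; ring_nf
      rw [heq]
      apply abs_log_sub (S_pos hκ0 hell hsum hu s _ _) (S_pos hκ0 hell hsum hu s _ _)
      · exact S_step hκ0 hell hsum hu s z y₀ (z + e) y₀
          (fun n => qtp_src_step hκ0 hell n z y₀ he)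
      · refine S_step hκ0 hell hsum hu s (z + e) y₀ z y₀ (fun n => ?_)
        have := qtp_src_step hκ0 hell n (z + e) y₀ (neg_mem_unitVecs he)
        have hzz : z + e + -e = z := by abel
        rwa [hzz] at this
    have Gstep_y : ∀ s : ℝ, ∀ x₀ : Fin d → ℤ, ∀ z, ∀ e ∈ unitVecs d,
        |Gfun d ω u s x₀ (z + e) - Gfun d ω u s x₀ z| ≤ C := by
      intro s x₀ z e he
      rw [Gfun_eq, Gfun_eq]
      have heq : |(- Real.log (Sfun d ω u s x₀ (z + e))) - (- Real.log (Sfun d ω u s x₀ z))|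
          = |Real.log (Sfun d ω u s x₀ (z + e)) - Real.log (Sfun d ω u s x₀ z)| := by
        rw [← abs_neg]; ring_nf
      rw [heq]
      apply abs_log_sub (S_pos hκ0 hell hsum hu s _ _) (S_pos hκ0 hell hsum hu s _ _)
      · refine S_step hκ0 hell hsum hu s x₀ z x₀ (z + e) (fun n => ?_)
        have := qtp_tgt_step hκ0 hell n x₀ (z + e) (-e) (neg_mem_unitVecs he)
        have hzz : z + e + -e = z := by abel
        rwa [hzz] at this
      · exact S_step hκ0 hell hsum hu s x₀ (z + e) x₀ z
          (fun n => qtp_tgt_step hκ0 hell n x₀ z e he)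
    -- time estimate
    have Gtime : ∀ x₀ y₀ : Fin d → ℤ,
        |Gfun d ω u (t + t') x₀ y₀ - Gfun d ω u t x₀ y₀| ≤ u * |t'| := by
      intro x₀ y₀
      rw [Gfun_eq, Gfun_eq]
      have heq : |(- Real.log (Sfun d ω u (t + t') x₀ y₀)) - (- Real.log (Sfun d ω u t x₀ y₀))|
          = |Real.log (Sfun d ω u (t + t') x₀ y₀) - Real.log (Sfun d ω u t x₀ y₀)| := by
        rw [← abs_neg]; ring_nf
      rw [heq]
      apply abs_log_sub (S_pos hκ0 hell hsum hu _ _ _) (S_pos hκ0 hell hsum hu _ _ _)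
      · have := S_time hκ0 hell hsum hu t (t + t') x₀ y₀
        have h' : |t + t' - t| = |t'| := by ring_nf
        rwa [h'] at this
      · have := S_time hκ0 hell hsum hu (t + t') t x₀ y₀
        have h' : |t - (t + t')| = |t'| := by rw [show t - (t + t') = -t' by ring, abs_neg]
        rwa [h'] at this
    -- space estimates
    have Gx : |Gfun d ω u t (x + x') (y + y') - Gfun d ω u t x (y + y')| ≤ C * (l1 x' : ℝ) :=
      lip_of_step C hC0 (fun z => Gfun d ω u t z (y + y'))
        (fun z e he => Gstep_x t (y + y') z e he) (l1 x') x' rfl x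
    have Gy : |Gfun d ω u t x (y + y') - Gfun d ω u t x y| ≤ C * (l1 y' : ℝ) :=
      lip_of_step C hC0 (fun z => Gfun d ω u t x z)
        (fun z e he => Gstep_y t x z e he) (l1 y') y' rfl y
    have Gt := Gtime (x + x') (y + y')
    have htot : |Gfun d ω u (t + t') (x + x') (y + y') - Gfun d ω u t x y|
        ≤ |Gfun d ω u (t + t') (x + x') (y + y') - Gfun d ω u t (x + x') (y + y')|
          + |Gfun d ω u t (x + x') (y + y') - Gfun d ω u t x (y + y')|
          + |Gfun d ω u t x (y + y') - Gfun d ω u t x y| := by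
      have h1 := abs_sub_le (Gfun d ω u (t + t') (x + x') (y + y'))
        (Gfun d ω u t (x + x') (y + y')) (Gfun d ω u t x y)
      have h2 := abs_sub_le (Gfun d ω u t (x + x') (y + y'))
        (Gfun d ω u t x (y + y')) (Gfun d ω u t x y)
      linarith
    have hut : u * |t'| ≤ C * |t'| :=
      mul_le_mul_of_nonneg_right (by rw [hC]; linarith) (abs_nonneg _)
    have habs : 0 ≤ |t'| := abs_nonneg _
    calc |Gfun d ω u (t + t') (x + x') (y + y') - Gfun d ω u t x y|
        ≤ u * |t'| + C * (l1 x' : ℝ) + C * (l1 y' : ℝ) := by linarith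
      _ ≤ C * |t'| + C * (l1 x' : ℝ) + C * (l1 y' : ℝ) := by linarith
      _ = C * (|t'| + (l1 x' : ℝ) + (l1 y' : ℝ)) := by ring
end

section
/- Let d ≥ 1, L > 0, and let g₀ : ℕ₊ × ℤ^d → ℝ satisfy: (a) integer homogeneity, g₀(k·m, k·z) = k · g₀(m, z) for all k, m ∈ ℕ₊ and z ∈ ℤ^d; and (b) the Lipschitz bound |g₀(m, z) − g₀(m', z')| ≤ L·(|m − m'| + |z − z'|₁) for all m, m' ∈ ℕ₊ and z, z' ∈ ℤ^d. Then there exists a unique continuous function g : (0,∞) × ℝ^d → ℝ such that g(m, z) = g₀(m, z) for all m ∈ ℕ₊, z ∈ ℤ^d, and g(c·t, c·η) = c · g(t, η) for all c > 0, t > 0, η ∈ ℝ^d. This g satisfies |g(t, η) − g(t', η')| ≤ L·(|t − t'| + |η − η'|₁) and g(t, η) = t · g(1, η/t) for all t > 0. If in addition g₀ is subadditive, i.e. g₀(m + m', z + z') ≤ g₀(m, z) + g₀(m', z') for all m, m' ∈ ℕ₊ and z, z' ∈ ℤ^d, then the function η ↦ g(1, η) is convex on ℝ^d. -/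
open Finset

noncomputable def extFun (d : ℕ) (L : ℝ) (g₀ : ℕ+ → (Fin d → ℤ) → ℝ)
    (t : ℝ) (η : Fin d → ℝ) : ℝ :=
  ⨅ p : ℕ+ × ℕ+ × (Fin d → ℤ),
    g₀ p.1 p.2.2 / ((p.2.1 : ℕ) : ℝ) +
      L * (|t - ((p.1 : ℕ) : ℝ) / ((p.2.1 : ℕ) : ℝ)| +
        ∑ i, |η i - ((p.2.2 i : ℤ) : ℝ) / ((p.2.1 : ℕ) : ℝ)|)

section

variable (d : ℕ) (L : ℝ) (hL : 0 < L) (g₀ : ℕ+ → (Fin d → ℤ) → ℝ)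
    (hhom : ∀ (k m : ℕ+) (z : Fin d → ℤ),
      g₀ (k * m) ((k : ℤ) • z) = (k : ℝ) * g₀ m z)
    (hlip : ∀ (m m' : ℕ+) (z z' : Fin d → ℤ),
      |g₀ m z - g₀ m' z'| ≤ L * (|(m : ℝ) - (m' : ℝ)| + ∑ i, |(z i : ℝ) - (z' i : ℝ)|))

include hL hhom hlip

omit hL in
theorem ratLip (n m n' m' : ℕ+) (z z' : Fin d → ℤ) :
    |g₀ n z / (m:ℝ) - g₀ n' z' / (m':ℝ)| ≤
      L * (|(n:ℝ)/(m:ℝ) - (n':ℝ)/(m':ℝ)| + ∑ i, |(z i : ℝ)/(m:ℝ) - (z' i : ℝ)/(m':ℝ)|) := by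
  have hm : (0:ℝ) < (m:ℝ) := by exact_mod_cast m.pos
  have hm' : (0:ℝ) < (m':ℝ) := by exact_mod_cast m'.pos
  have key := hlip (m' * n) (m * n') ((m' : ℤ) • z) ((m : ℤ) • z')
  rw [hhom m' n z, hhom m n' z'] at key
  simp only [Pi.smul_apply, smul_eq_mul] at key
  push_cast at key
  have e1 : g₀ n z / (m:ℝ) - g₀ n' z' / (m':ℝ)
      = ((m':ℝ) * g₀ n z - (m:ℝ) * g₀ n' z') / ((m:ℝ) * (m':ℝ)) := by
    field_simp
  have e2 : (n:ℝ)/(m:ℝ) - (n':ℝ)/(m':ℝ)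
      = ((m':ℝ) * (n:ℝ) - (m:ℝ) * (n':ℝ)) / ((m:ℝ) * (m':ℝ)) := by
    field_simp
  have e3 : ∀ i, (z i : ℝ)/(m:ℝ) - (z' i : ℝ)/(m':ℝ)
      = ((m':ℝ) * (z i:ℝ) - (m:ℝ) * (z' i:ℝ)) / ((m:ℝ) * (m':ℝ)) := by
    intro i; field_simp
  rw [e1, e2, abs_div, abs_div, abs_of_pos (by positivity : (0:ℝ) < (m:ℝ)*(m':ℝ))]
  have e4 : ∀ i, |(z i : ℝ)/(m:ℝ) - (z' i : ℝ)/(m':ℝ)|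
      = |(m':ℝ) * (z i:ℝ) - (m:ℝ) * (z' i:ℝ)| / ((m:ℝ)*(m':ℝ)) := by
    intro i; rw [e3 i, abs_div, abs_of_pos (by positivity : (0:ℝ) < (m:ℝ)*(m':ℝ))]
  simp only [e4]
  rw [← Finset.sum_div, ← add_div, ← mul_div_assoc]
  gcongr

theorem termLB (t : ℝ) (η : Fin d → ℝ) (p : ℕ+ × ℕ+ × (Fin d → ℤ)) :
    g₀ 1 0 - L * (|t - 1| + ∑ i, |η i|) ≤
      g₀ p.1 p.2.2 / ((p.2.1 : ℕ) : ℝ) +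
        L * (|t - ((p.1 : ℕ) : ℝ) / ((p.2.1 : ℕ) : ℝ)| +
          ∑ i, |η i - ((p.2.2 i : ℤ) : ℝ) / ((p.2.1 : ℕ) : ℝ)|) := by
  obtain ⟨n, m, z⟩ := p
  have h0 := ratLip d L g₀ hhom hlip n m 1 1 z 0
  simp only [PNat.one_coe, Nat.cast_one, div_one, Pi.zero_apply, Int.cast_zero, zero_div,
    sub_zero] at h0
  have hA : |(n:ℝ)/(m:ℝ) - 1| ≤ |t - (n:ℝ)/(m:ℝ)| + |t - 1| := by
    have := abs_sub_le ((n:ℝ)/(m:ℝ)) t 1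
    have h2 : |(n:ℝ)/(m:ℝ) - t| = |t - (n:ℝ)/(m:ℝ)| := abs_sub_comm _ _
    linarith
  have hS : ∑ i, |(z i : ℝ)/(m:ℝ)| ≤
      (∑ i, |η i - (z i : ℝ)/(m:ℝ)|) + ∑ i, |η i| := by
    rw [← Finset.sum_add_distrib]
    apply Finset.sum_le_sum
    intro i _
    have := abs_sub_le ((z i : ℝ)/(m:ℝ)) (η i) 0
    simp only [sub_zero] at this
    have h2 : |(z i : ℝ)/(m:ℝ) - η i| = |η i - (z i : ℝ)/(m:ℝ)| := abs_sub_comm _ _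
    linarith
  have habs : g₀ 1 0 - g₀ n z / (m:ℝ) ≤
      L * (|(n:ℝ)/(m:ℝ) - 1| + ∑ i, |(z i : ℝ)/(m:ℝ)|) := by
    have := abs_sub_comm (g₀ n z / (m:ℝ)) (g₀ 1 0)
    have := neg_abs_le (g₀ n z / (m:ℝ) - g₀ 1 0)
    linarith
  have hmul : L * (|(n:ℝ)/(m:ℝ) - 1| + ∑ i, |(z i : ℝ)/(m:ℝ)|) ≤
      L * ((|t - (n:ℝ)/(m:ℝ)| + ∑ i, |η i - (z i : ℝ)/(m:ℝ)|) + (|t - 1| + ∑ i, |η i|)) := by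
    apply mul_le_mul_of_nonneg_left _ hL.le
    linarith
  simp only
  linarith

theorem extBdd (t : ℝ) (η : Fin d → ℝ) :
    BddBelow (Set.range fun p : ℕ+ × ℕ+ × (Fin d → ℤ) =>
      g₀ p.1 p.2.2 / ((p.2.1 : ℕ) : ℝ) +
        L * (|t - ((p.1 : ℕ) : ℝ) / ((p.2.1 : ℕ) : ℝ)| +
          ∑ i, |η i - ((p.2.2 i : ℤ) : ℝ) / ((p.2.1 : ℕ) : ℝ)|)) := by
  refine ⟨g₀ 1 0 - L * (|t - 1| + ∑ i, |η i|), ?_⟩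
  rintro x ⟨p, rfl⟩
  exact termLB d L hL g₀ hhom hlip t η p

theorem valueD (n m : ℕ+) (z : Fin d → ℤ) :
    extFun d L g₀ ((n:ℝ)/(m:ℝ)) (fun i => (z i : ℝ)/(m:ℝ)) = g₀ n z / (m:ℝ) := by
  apply le_antisymm
  · have := ciInf_le (extBdd d L hL g₀ hhom hlip ((n:ℝ)/(m:ℝ)) (fun i => (z i : ℝ)/(m:ℝ)))
      (⟨n, m, z⟩ : ℕ+ × ℕ+ × (Fin d → ℤ))
    simp at this; exact this
  · apply le_ciInf
    rintro ⟨n', m', z'⟩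
    have h0 := ratLip d L g₀ hhom hlip n m n' m' z z'
    have h1 := abs_le.mp h0
    simp only
    linarith [h1.1]

theorem extLe (t t' : ℝ) (η η' : Fin d → ℝ) :
    extFun d L g₀ t η ≤ extFun d L g₀ t' η' + L * (|t - t'| + ∑ i, |η i - η' i|) := by
  rw [← sub_le_iff_le_add]
  apply le_ciInf
  rintro ⟨n, m, z⟩
  have h1 := ciInf_le (extBdd d L hL g₀ hhom hlip t η) (⟨n, m, z⟩ : ℕ+ × ℕ+ × (Fin d → ℤ))
  dsimp only at h1 ⊢
  have hA : |t - (n:ℝ)/(m:ℝ)| ≤ |t - t'| + |t' - (n:ℝ)/(m:ℝ)| := abs_sub_le t t' _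
  have hS : ∑ i, |η i - (z i : ℝ)/(m:ℝ)| ≤
      (∑ i, |η i - η' i|) + ∑ i, |η' i - (z i : ℝ)/(m:ℝ)| := by
    rw [← Finset.sum_add_distrib]
    exact Finset.sum_le_sum fun i _ => abs_sub_le _ _ _
  have h1' : extFun d L g₀ t η ≤ g₀ n z / (m:ℝ)
      + L * (|t - (n:ℝ)/(m:ℝ)| + ∑ i, |η i - (z i : ℝ)/(m:ℝ)|) := h1
  have hmul := mul_le_mul_of_nonneg_left (add_le_add hA hS) hL.le
  have expand : L * ((|t - t'| + |t' - (n:ℝ)/(m:ℝ)|) +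
      ((∑ i, |η i - η' i|) + ∑ i, |η' i - (z i : ℝ)/(m:ℝ)|))
      = L * (|t - t'| + ∑ i, |η i - η' i|)
        + L * (|t' - (n:ℝ)/(m:ℝ)| + ∑ i, |η' i - (z i : ℝ)/(m:ℝ)|) := by ring
  linarith

theorem extLip (t t' : ℝ) (η η' : Fin d → ℝ) :
    |extFun d L g₀ t η - extFun d L g₀ t' η'| ≤ L * (|t - t'| + ∑ i, |η i - η' i|) := by
  rw [abs_sub_le_iff]
  constructor
  · linarith [extLe d L hL g₀ hhom hlip t t' η η']
  · have h := extLe d L hL g₀ hhom hlip t' t η' η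
    have e1 : |t' - t| = |t - t'| := abs_sub_comm _ _
    have e2 : ∑ i, |η' i - η i| = ∑ i, |η i - η' i| :=
      Finset.sum_congr rfl fun i _ => abs_sub_comm _ _
    rw [e1, e2] at h
    linarith

omit hL hhom hlip in
theorem approxT (t : ℝ) (m : ℕ+) (hm : 1 ≤ t * (m:ℝ)) :
    ∃ n : ℕ+, |t - (n:ℝ)/(m:ℝ)| ≤ 1/(m:ℝ) := by
  have hmp : (0:ℝ) < (m:ℝ) := by exact_mod_cast m.pos
  have ht : 0 < t := by nlinarith
  have hfl : 1 ≤ ⌊t * (m:ℝ)⌋₊ := Nat.le_floor (by exact_mod_cast hm)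
  refine ⟨⟨⌊t * (m:ℝ)⌋₊, hfl⟩, ?_⟩
  set k := ⌊t * (m:ℝ)⌋₊ with hk
  have h1 : (k:ℝ) ≤ t * m := Nat.floor_le (by positivity)
  have h2 : t * m < (k:ℝ) + 1 := Nat.lt_floor_add_one _
  have e1 : (k:ℝ)/(m:ℝ) ≤ t := (div_le_iff₀ hmp).mpr (by linarith)
  have e2 : t ≤ ((k:ℝ) + 1)/(m:ℝ) := (le_div_iff₀ hmp).mpr (by linarith)
  rw [add_div] at e2
  show |t - (k:ℝ)/(m:ℝ)| ≤ 1/(m:ℝ)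
  rw [abs_of_nonneg (by linarith)]
  linarith

omit hL hhom hlip in
theorem approxZ (η : Fin d → ℝ) (m : ℕ+) :
    ∃ z : Fin d → ℤ, ∀ i, |η i - (z i : ℝ)/(m:ℝ)| ≤ 1/(m:ℝ) := by
  have hmp : (0:ℝ) < (m:ℝ) := by exact_mod_cast m.pos
  refine ⟨fun i => ⌊η i * m⌋, fun i => ?_⟩
  have h1 : (⌊η i * m⌋ : ℝ) ≤ η i * m := Int.floor_le _
  have h2 : η i * m < (⌊η i * m⌋ : ℝ) + 1 := Int.lt_floor_add_one _
  have e1 : ((⌊η i * m⌋ : ℝ))/(m:ℝ) ≤ η i := (div_le_iff₀ hmp).mpr (by linarith)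
  have e2 : η i ≤ ((⌊η i * m⌋ : ℝ) + 1)/(m:ℝ) := (le_div_iff₀ hmp).mpr (by linarith)
  rw [add_div] at e2
  rw [abs_of_nonneg (by linarith)]
  linarith

omit hL hhom hlip in
theorem exists_pnat_gt (A : ℝ) : ∃ m : ℕ+, A < (m:ℝ) := by
  obtain ⟨N, hN⟩ := exists_nat_gt A
  refine ⟨⟨N + 1, N.succ_pos⟩, ?_⟩
  show A < ((N + 1 : ℕ) : ℝ)
  push_cast
  linarith

theorem extHomD (c : ℝ) (hc : 0 < c) (n m : ℕ+) (z : Fin d → ℤ) :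
    extFun d L g₀ (c * ((n:ℝ)/(m:ℝ))) (c • fun i => (z i : ℝ)/(m:ℝ))
      = c * (g₀ n z / (m:ℝ)) := by
  set f : Fin d → ℝ := fun i => (z i : ℝ)/(m:ℝ) with hf
  set C : ℝ := L * ((n:ℝ)/(m:ℝ) + ∑ i, |f i|) + |g₀ n z / (m:ℝ)| with hC
  have hC0 : 0 ≤ C := by
    apply add_nonneg _ (abs_nonneg _)
    apply mul_nonneg hL.le
    apply add_nonneg (by positivity)
    exact Finset.sum_nonneg fun i _ => abs_nonneg _
  have key : ∀ ε > 0, |extFun d L g₀ (c * ((n:ℝ)/(m:ℝ))) (c • f) - c * (g₀ n z / (m:ℝ))| ≤ ε := by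
    intro ε hε
    obtain ⟨m', hm'⟩ := exists_pnat_gt (max (1/c) ((C+1)/ε))
    have hm'p : (0:ℝ) < (m':ℝ) := by exact_mod_cast m'.pos
    have h1c : 1 ≤ c * (m':ℝ) := by
      have h := lt_of_le_of_lt (le_max_left (1/c) ((C+1)/ε)) hm'
      rw [div_lt_iff₀ hc] at h
      nlinarith
    obtain ⟨n', hn'⟩ := approxT c m' h1c
    set q : ℝ := (n':ℝ)/(m':ℝ) with hq
    have hv := valueD d L hL g₀ hhom hlip (n'*n) (m'*m) ((n' : ℤ) • z)
    have a1 : (((n'*n : ℕ+) : ℕ):ℝ)/(((m'*m : ℕ+) : ℕ):ℝ) = q * ((n:ℝ)/(m:ℝ)) := by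
      rw [PNat.mul_coe, PNat.mul_coe, hq]; push_cast; ring
    have a2 : (fun i => ((((n' : ℤ) • z) i : ℤ):ℝ)/(((m'*m : ℕ+) : ℕ):ℝ)) = q • f := by
      funext i
      simp only [Pi.smul_apply, smul_eq_mul, PNat.mul_coe, hf, hq]
      push_cast
      ring
    rw [a1, a2, hhom n' n z] at hv
    have hv2 : extFun d L g₀ (q * ((n:ℝ)/(m:ℝ))) (q • f) = q * (g₀ n z / (m:ℝ)) := by
      rw [hv, PNat.mul_coe, hq]; push_cast; ring
    have hd1 := extLip d L hL g₀ hhom hlip (c * ((n:ℝ)/(m:ℝ))) (q * ((n:ℝ)/(m:ℝ))) (c • f) (q • f)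
    have e1 : |c * ((n:ℝ)/(m:ℝ)) - q * ((n:ℝ)/(m:ℝ))| = |c - q| * ((n:ℝ)/(m:ℝ)) := by
      rw [show c * ((n:ℝ)/(m:ℝ)) - q * ((n:ℝ)/(m:ℝ)) = (c - q) * ((n:ℝ)/(m:ℝ)) by ring,
        abs_mul, abs_of_nonneg (by positivity : (0:ℝ) ≤ (n:ℝ)/(m:ℝ))]
    have e2 : ∀ i, |(c • f) i - (q • f) i| = |c - q| * |f i| := by
      intro i
      simp only [Pi.smul_apply, smul_eq_mul]
      rw [show c * f i - q * f i = (c - q) * f i by ring, abs_mul]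
    rw [e1] at hd1
    simp only [e2] at hd1
    rw [← Finset.mul_sum] at hd1
    have t1 : |q * (g₀ n z/(m:ℝ)) - c * (g₀ n z/(m:ℝ))| = |c - q| * |g₀ n z/(m:ℝ)| := by
      rw [show q * (g₀ n z/(m:ℝ)) - c * (g₀ n z/(m:ℝ))
          = -((c - q) * (g₀ n z/(m:ℝ))) by ring, abs_neg, abs_mul]
    have final : |extFun d L g₀ (c * ((n:ℝ)/(m:ℝ))) (c • f) - c * (g₀ n z / (m:ℝ))|
        ≤ |c - q| * C := by
      calc |extFun d L g₀ (c * ((n:ℝ)/(m:ℝ))) (c • f) - c * (g₀ n z / (m:ℝ))|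
          ≤ |extFun d L g₀ (c * ((n:ℝ)/(m:ℝ))) (c • f)
              - extFun d L g₀ (q * ((n:ℝ)/(m:ℝ))) (q • f)|
            + |extFun d L g₀ (q * ((n:ℝ)/(m:ℝ))) (q • f) - c * (g₀ n z / (m:ℝ))| :=
          abs_sub_le _ _ _
        _ = |extFun d L g₀ (c * ((n:ℝ)/(m:ℝ))) (c • f)
              - extFun d L g₀ (q * ((n:ℝ)/(m:ℝ))) (q • f)|
            + |c - q| * |g₀ n z/(m:ℝ)| := by rw [hv2, t1]
        _ ≤ L * (|c - q| * ((n:ℝ)/(m:ℝ)) + |c - q| * ∑ i, |f i|)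
            + |c - q| * |g₀ n z/(m:ℝ)| := by linarith
        _ = |c - q| * C := by rw [hC]; ring
    have h2 : (C+1)/ε < (m':ℝ) := lt_of_le_of_lt (le_max_right _ _) hm'
    have h3 : C + 1 < ε * (m':ℝ) := by rw [div_lt_iff₀ hε] at h2; linarith
    have h4 : |c - q| * C ≤ (1/(m':ℝ)) * C := mul_le_mul_of_nonneg_right hn' hC0
    have h5 : (1/(m':ℝ)) * C < ε := by
      rw [one_div, inv_mul_eq_div, div_lt_iff₀ hm'p]
      nlinarith
    linarith
  have h0 : |extFun d L g₀ (c * ((n:ℝ)/(m:ℝ))) (c • f) - c * (g₀ n z / (m:ℝ))| ≤ 0 := by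
    apply le_of_forall_pos_le_add
    intro ε hε
    simpa using key ε hε
  have := abs_nonneg (extFun d L g₀ (c * ((n:ℝ)/(m:ℝ))) (c • f) - c * (g₀ n z / (m:ℝ)))
  exact sub_eq_zero.mp (abs_eq_zero.mp (le_antisymm h0 this))

theorem extHom (c : ℝ) (hc : 0 < c) (t : ℝ) (ht : 0 < t) (η : Fin d → ℝ) :
    extFun d L g₀ (c * t) (c • η) = c * extFun d L g₀ t η := by
  have key : ∀ ε > 0, |extFun d L g₀ (c * t) (c • η) - c * extFun d L g₀ t η| ≤ ε := by
    intro ε hε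
    obtain ⟨m, hm⟩ := exists_pnat_gt (max (1/t) (2*L*c*((d:ℝ)+1)/ε))
    have hmp : (0:ℝ) < (m:ℝ) := by exact_mod_cast m.pos
    have h1t : 1 ≤ t * (m:ℝ) := by
      have h := lt_of_le_of_lt (le_max_left _ _) hm
      rw [div_lt_iff₀ ht] at h
      nlinarith
    obtain ⟨n, hn⟩ := approxT t m h1t
    obtain ⟨z, hz⟩ := approxZ d η m
    set f : Fin d → ℝ := fun i => (z i : ℝ)/(m:ℝ) with hf
    have hδ : |t - (n:ℝ)/(m:ℝ)| + ∑ i, |η i - f i| ≤ ((d:ℝ)+1)/(m:ℝ) := by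
      have hs : ∑ i, |η i - f i| ≤ ∑ _i : Fin d, 1/(m:ℝ) :=
        Finset.sum_le_sum fun i _ => hz i
      rw [Finset.sum_const, Finset.card_univ, Fintype.card_fin, nsmul_eq_mul] at hs
      have : ((d:ℝ)+1)/(m:ℝ) = 1/(m:ℝ) + (d:ℝ) * (1/(m:ℝ)) := by field_simp; ring
      rw [this]
      linarith
    have h1 := extLip d L hL g₀ hhom hlip (c * t) (c * ((n:ℝ)/(m:ℝ))) (c • η) (c • f)
    have e1 : |c * t - c * ((n:ℝ)/(m:ℝ))| = c * |t - (n:ℝ)/(m:ℝ)| := by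
      rw [show c * t - c * ((n:ℝ)/(m:ℝ)) = c * (t - (n:ℝ)/(m:ℝ)) by ring, abs_mul,
        abs_of_pos hc]
    have e2 : ∀ i, |(c • η) i - (c • f) i| = c * |η i - f i| := by
      intro i
      simp only [Pi.smul_apply, smul_eq_mul]
      rw [show c * η i - c * f i = c * (η i - f i) by ring, abs_mul, abs_of_pos hc]
    rw [e1] at h1
    simp only [e2] at h1
    rw [← Finset.mul_sum] at h1
    have h2 : extFun d L g₀ (c * ((n:ℝ)/(m:ℝ))) (c • f) = c * (g₀ n z / (m:ℝ)) :=
      extHomD d L hL g₀ hhom hlip c hc n m z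
    have h3 := extLip d L hL g₀ hhom hlip t ((n:ℝ)/(m:ℝ)) η f
    rw [valueD d L hL g₀ hhom hlip n m z] at h3
    -- combine
    have hLc : 0 ≤ L * c := by positivity
    have hb1 : |extFun d L g₀ (c * t) (c • η) - c * (g₀ n z / (m:ℝ))|
        ≤ L * (c * |t - (n:ℝ)/(m:ℝ)| + c * ∑ i, |η i - f i|) := by
      rw [← h2]; exact h1
    have hb2 : |c * extFun d L g₀ t η - c * (g₀ n z / (m:ℝ))|
        = c * |extFun d L g₀ t η - g₀ n z / (m:ℝ)| := by
      rw [show c * extFun d L g₀ t η - c * (g₀ n z / (m:ℝ))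
          = c * (extFun d L g₀ t η - g₀ n z / (m:ℝ)) by ring, abs_mul, abs_of_pos hc]
    have htri := abs_sub_le (extFun d L g₀ (c * t) (c • η)) (c * (g₀ n z / (m:ℝ)))
      (c * extFun d L g₀ t η)
    have habs2 : |c * (g₀ n z / (m:ℝ)) - c * extFun d L g₀ t η|
        = c * |extFun d L g₀ t η - g₀ n z / (m:ℝ)| := by
      rw [show c * (g₀ n z / (m:ℝ)) - c * extFun d L g₀ t η
          = -(c * (extFun d L g₀ t η - g₀ n z / (m:ℝ))) by ring, abs_neg, abs_mul,
        abs_of_pos hc]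
    have hbound : |extFun d L g₀ (c * t) (c • η) - c * extFun d L g₀ t η|
        ≤ 2 * L * c * (((d:ℝ)+1)/(m:ℝ)) := by
      have q1 : L * (c * |t - (n:ℝ)/(m:ℝ)| + c * ∑ i, |η i - f i|)
          ≤ L * c * (((d:ℝ)+1)/(m:ℝ)) := by
        rw [show L * (c * |t - (n:ℝ)/(m:ℝ)| + c * ∑ i, |η i - f i|)
            = L * c * (|t - (n:ℝ)/(m:ℝ)| + ∑ i, |η i - f i|) by ring]
        exact mul_le_mul_of_nonneg_left hδ hLc
      have q2 : c * |extFun d L g₀ t η - g₀ n z / (m:ℝ)|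
          ≤ c * (L * (((d:ℝ)+1)/(m:ℝ))) := by
        apply mul_le_mul_of_nonneg_left _ hc.le
        calc |extFun d L g₀ t η - g₀ n z / (m:ℝ)|
            ≤ L * (|t - (n:ℝ)/(m:ℝ)| + ∑ i, |η i - f i|) := h3
          _ ≤ L * (((d:ℝ)+1)/(m:ℝ)) := mul_le_mul_of_nonneg_left hδ hL.le
      nlinarith [hb1, htri, habs2]
    have hfin : 2*L*c*(((d:ℝ)+1)/(m:ℝ)) ≤ ε := by
      have h := lt_of_le_of_lt (le_max_right (1/t) (2*L*c*((d:ℝ)+1)/ε)) hm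
      rw [div_lt_iff₀ hε] at h
      rw [mul_div_assoc] at *
      have hd1 : (0:ℝ) < (d:ℝ)+1 := by positivity
      rw [show 2*L*c*(((d:ℝ)+1)/(m:ℝ)) = (2*L*c*((d:ℝ)+1))/(m:ℝ) by ring,
        div_le_iff₀ hmp]
      nlinarith
    linarith
  have h0 : |extFun d L g₀ (c * t) (c • η) - c * extFun d L g₀ t η| ≤ 0 := by
    apply le_of_forall_pos_le_add
    intro ε hε
    simpa using key ε hε
  have hnn := abs_nonneg (extFun d L g₀ (c * t) (c • η) - c * extFun d L g₀ t η)
  exact sub_eq_zero.mp (abs_eq_zero.mp (le_antisymm h0 hnn))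

omit hL hhom hlip in
theorem deltaBound (t : ℝ) (η : Fin d → ℝ) (m : ℕ+) (a : ℝ) (f : Fin d → ℝ)
    (hn : |t - a| ≤ 1/(m:ℝ)) (hz : ∀ i, |η i - f i| ≤ 1/(m:ℝ)) :
    |t - a| + ∑ i, |η i - f i| ≤ ((d:ℝ)+1)/(m:ℝ) := by
  have hmp : (0:ℝ) < (m:ℝ) := by exact_mod_cast m.pos
  have hs : ∑ i, |η i - f i| ≤ ∑ _i : Fin d, 1/(m:ℝ) :=
    Finset.sum_le_sum fun i _ => hz i
  rw [Finset.sum_const, Finset.card_univ, Fintype.card_fin, nsmul_eq_mul] at hs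
  have e : ((d:ℝ)+1)/(m:ℝ) = 1/(m:ℝ) + (d:ℝ) * (1/(m:ℝ)) := by field_simp; ring
  rw [e]
  linarith

theorem extSubadd
    (hsub : ∀ (m m' : ℕ+) (z z' : Fin d → ℤ), g₀ (m + m') (z + z') ≤ g₀ m z + g₀ m' z')
    (t t' : ℝ) (ht : 0 < t) (ht' : 0 < t') (η η' : Fin d → ℝ) :
    extFun d L g₀ (t + t') (η + η') ≤ extFun d L g₀ t η + extFun d L g₀ t' η' := by
  apply le_of_forall_pos_le_add
  intro ε hε
  obtain ⟨m, hm⟩ := exists_pnat_gt (max (max (1/t) (1/t')) (4*L*((d:ℝ)+1)/ε))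
  have hmp : (0:ℝ) < (m:ℝ) := by exact_mod_cast m.pos
  have h1t : 1 ≤ t * (m:ℝ) := by
    have h := lt_of_le_of_lt ((le_max_left (1/t) (1/t')).trans (le_max_left _ _)) hm
    rw [div_lt_iff₀ ht] at h
    nlinarith
  have h1t' : 1 ≤ t' * (m:ℝ) := by
    have h := lt_of_le_of_lt ((le_max_right (1/t) (1/t')).trans (le_max_left _ _)) hm
    rw [div_lt_iff₀ ht'] at h
    nlinarith
  obtain ⟨n, hn⟩ := approxT t m h1t
  obtain ⟨n', hn'⟩ := approxT t' m h1t'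
  obtain ⟨z, hz⟩ := approxZ d η m
  obtain ⟨z', hz'⟩ := approxZ d η' m
  have hδ := deltaBound d t η m ((n:ℝ)/(m:ℝ)) (fun i => (z i:ℝ)/(m:ℝ)) hn hz
  have hδ' := deltaBound d t' η' m ((n':ℝ)/(m:ℝ)) (fun i => (z' i:ℝ)/(m:ℝ)) hn' hz'
  have hv := valueD d L hL g₀ hhom hlip (n+n') m (z+z')
  have hv1 := valueD d L hL g₀ hhom hlip n m z
  have hv2 := valueD d L hL g₀ hhom hlip n' m z'
  have a1 : (((n+n' : ℕ+) : ℕ):ℝ) = (n:ℝ) + (n':ℝ) := by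
    rw [PNat.add_coe]; push_cast; ring
  have a2 : (fun i => (((z+z') i : ℤ):ℝ)/(m:ℝ))
      = fun i => ((z i:ℝ) + (z' i:ℝ))/(m:ℝ) := by
    funext i; rw [Pi.add_apply]; push_cast; ring
  rw [a1, a2] at hv
  have step1 := extLe d L hL g₀ hhom hlip (t+t') (((n:ℝ)+(n':ℝ))/(m:ℝ)) (η+η')
    (fun i => ((z i:ℝ)+(z' i:ℝ))/(m:ℝ))
  rw [hv] at step1
  have b1 : |t + t' - ((n:ℝ)+(n':ℝ))/(m:ℝ)|
      ≤ |t - (n:ℝ)/(m:ℝ)| + |t' - (n':ℝ)/(m:ℝ)| := by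
    have e : t + t' - ((n:ℝ)+(n':ℝ))/(m:ℝ)
        = (t - (n:ℝ)/(m:ℝ)) + (t' - (n':ℝ)/(m:ℝ)) := by field_simp; ring
    rw [e]; exact abs_add_le _ _
  have b2 : ∑ i, |(η+η') i - ((z i:ℝ)+(z' i:ℝ))/(m:ℝ)|
      ≤ (∑ i, |η i - (z i:ℝ)/(m:ℝ)|) + ∑ i, |η' i - (z' i:ℝ)/(m:ℝ)| := by
    rw [← Finset.sum_add_distrib]
    apply Finset.sum_le_sum
    intro i _
    have e : (η+η') i - ((z i:ℝ)+(z' i:ℝ))/(m:ℝ)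
        = (η i - (z i:ℝ)/(m:ℝ)) + (η' i - (z' i:ℝ)/(m:ℝ)) := by
      rw [Pi.add_apply]; field_simp; ring
    rw [e]; exact abs_add_le _ _
  have hsubv : g₀ (n+n') (z+z') / (m:ℝ) ≤ g₀ n z/(m:ℝ) + g₀ n' z'/(m:ℝ) := by
    rw [← add_div]
    gcongr
    exact hsub n n' z z'
  have c1 : g₀ n z/(m:ℝ) ≤ extFun d L g₀ t η + L * (((d:ℝ)+1)/(m:ℝ)) := by
    have h := extLip d L hL g₀ hhom hlip t ((n:ℝ)/(m:ℝ)) η (fun i => (z i:ℝ)/(m:ℝ))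
    rw [hv1] at h
    have hb := abs_le.mp h
    have hmm := mul_le_mul_of_nonneg_left hδ hL.le
    linarith [hb.1]
  have c2 : g₀ n' z'/(m:ℝ) ≤ extFun d L g₀ t' η' + L * (((d:ℝ)+1)/(m:ℝ)) := by
    have h := extLip d L hL g₀ hhom hlip t' ((n':ℝ)/(m:ℝ)) η' (fun i => (z' i:ℝ)/(m:ℝ))
    rw [hv2] at h
    have hb := abs_le.mp h
    have hmm := mul_le_mul_of_nonneg_left hδ' hL.le
    linarith [hb.1]
  have hLd : L * (|t + t' - ((n:ℝ)+(n':ℝ))/(m:ℝ)|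
      + ∑ i, |(η+η') i - ((z i:ℝ)+(z' i:ℝ))/(m:ℝ)|) ≤ 2*L*(((d:ℝ)+1)/(m:ℝ)) := by
    have h1 := mul_le_mul_of_nonneg_left (add_le_add b1 b2) hL.le
    have h2 := mul_le_mul_of_nonneg_left (add_le_add hδ hδ') hL.le
    have e : L * ((|t - (n:ℝ)/(m:ℝ)| + |t' - (n':ℝ)/(m:ℝ)|)
        + ((∑ i, |η i - (z i:ℝ)/(m:ℝ)|) + ∑ i, |η' i - (z' i:ℝ)/(m:ℝ)|))
        = L * ((|t - (n:ℝ)/(m:ℝ)| + ∑ i, |η i - (z i:ℝ)/(m:ℝ)|)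
          + (|t' - (n':ℝ)/(m:ℝ)| + ∑ i, |η' i - (z' i:ℝ)/(m:ℝ)|)) := by ring
    have e2 : L * (((d:ℝ)+1)/(m:ℝ) + ((d:ℝ)+1)/(m:ℝ)) = 2*L*(((d:ℝ)+1)/(m:ℝ)) := by ring
    linarith
  have hfin : 4*L*(((d:ℝ)+1)/(m:ℝ)) ≤ ε := by
    have h := lt_of_le_of_lt (le_max_right (max (1/t) (1/t')) (4*L*((d:ℝ)+1)/ε)) hm
    rw [div_lt_iff₀ hε] at h
    rw [show 4*L*(((d:ℝ)+1)/(m:ℝ)) = (4*L*((d:ℝ)+1))/(m:ℝ) by ring, div_le_iff₀ hmp]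
    nlinarith
  have hL2 : 2*L*(((d:ℝ)+1)/(m:ℝ)) + 2*L*(((d:ℝ)+1)/(m:ℝ)) ≤ ε := by linarith
  linarith

theorem extCont : Continuous (fun p : ℝ × (Fin d → ℝ) => extFun d L g₀ p.1 p.2) := by
  have hK : (0:ℝ) ≤ L * ((d:ℝ)+1) := by positivity
  apply LipschitzWith.continuous (K := Real.toNNReal (L*((d:ℝ)+1)))
  apply LipschitzWith.of_dist_le_mul
  intro p q
  rw [Real.dist_eq]
  have h := extLip d L hL g₀ hhom hlip p.1 q.1 p.2 q.2
  have h1 : |p.1 - q.1| ≤ dist p q := by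
    rw [← Real.dist_eq, Prod.dist_eq]
    exact le_max_left _ _
  have h2 : ∀ i, |p.2 i - q.2 i| ≤ dist p q := by
    intro i
    rw [← Real.dist_eq]
    calc dist (p.2 i) (q.2 i) ≤ dist p.2 q.2 := dist_le_pi_dist _ _ i
      _ ≤ dist p q := by rw [Prod.dist_eq]; exact le_max_right _ _
  have hsum : ∑ i, |p.2 i - q.2 i| ≤ (d:ℝ) * dist p q := by
    calc ∑ i, |p.2 i - q.2 i| ≤ ∑ _i : Fin d, dist p q :=
        Finset.sum_le_sum fun i _ => h2 i
      _ = (d:ℝ) * dist p q := by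
        rw [Finset.sum_const, Finset.card_univ, Fintype.card_fin, nsmul_eq_mul]
  have hcoe : ((Real.toNNReal (L*((d:ℝ)+1))) : ℝ) = L*((d:ℝ)+1) := Real.coe_toNNReal _ hK
  rw [hcoe]
  calc |extFun d L g₀ p.1 p.2 - extFun d L g₀ q.1 q.2|
      ≤ L * (|p.1 - q.1| + ∑ i, |p.2 i - q.2 i|) := h
    _ ≤ L * (dist p q + (d:ℝ) * dist p q) :=
      mul_le_mul_of_nonneg_left (add_le_add h1 hsum) hL.le
    _ = L * ((d:ℝ)+1) * dist p q := by ring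

end

theorem stmt4 (d : ℕ) (hd : 1 ≤ d) (L : ℝ) (hL : 0 < L)
    (g₀ : ℕ+ → (Fin d → ℤ) → ℝ)
    (hhom : ∀ (k m : ℕ+) (z : Fin d → ℤ),
      g₀ (k * m) ((k : ℤ) • z) = (k : ℝ) * g₀ m z)
    (hlip : ∀ (m m' : ℕ+) (z z' : Fin d → ℤ),
      |g₀ m z - g₀ m' z'| ≤ L * (|(m : ℝ) - (m' : ℝ)| + ∑ i, |(z i : ℝ) - (z' i : ℝ)|)) :
    ∃ g : ℝ → (Fin d → ℝ) → ℝ,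
      -- existence: a continuous, homogeneous extension of `g₀` to `(0,∞) × ℝ^d`
      (ContinuousOn (fun p : ℝ × (Fin d → ℝ) => g p.1 p.2) {p | 0 < p.1} ∧
        (∀ (m : ℕ+) (z : Fin d → ℤ), g (m : ℝ) (fun i => (z i : ℝ)) = g₀ m z) ∧
        (∀ c t : ℝ, 0 < c → 0 < t → ∀ η : Fin d → ℝ, g (c * t) (c • η) = c * g t η)) ∧
      -- uniqueness among such functions (on the domain `(0,∞) × ℝ^d`)
      (∀ g' : ℝ → (Fin d → ℝ) → ℝ,
        (ContinuousOn (fun p : ℝ × (Fin d → ℝ) => g' p.1 p.2) {p | 0 < p.1} ∧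
          (∀ (m : ℕ+) (z : Fin d → ℤ), g' (m : ℝ) (fun i => (z i : ℝ)) = g₀ m z) ∧
          (∀ c t : ℝ, 0 < c → 0 < t → ∀ η : Fin d → ℝ, g' (c * t) (c • η) = c * g' t η)) →
        ∀ t : ℝ, 0 < t → ∀ η : Fin d → ℝ, g' t η = g t η) ∧
      -- the Lipschitz bound for `g`
      (∀ t t' : ℝ, 0 < t → 0 < t' → ∀ η η' : Fin d → ℝ,
        |g t η - g t' η'| ≤ L * (|t - t'| + ∑ i, |η i - η' i|)) ∧
      -- the scaling identity `g(t,η) = t g(1, η/t)`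
      (∀ t : ℝ, 0 < t → ∀ η : Fin d → ℝ, g t η = t * g 1 (t⁻¹ • η)) ∧
      -- subadditivity of `g₀` implies convexity of `η ↦ g(1,η)`
      ((∀ (m m' : ℕ+) (z z' : Fin d → ℤ),
          g₀ (m + m') (z + z') ≤ g₀ m z + g₀ m' z') →
        ConvexOn ℝ Set.univ (fun η : Fin d → ℝ => g 1 η)) := by
  refine ⟨extFun d L g₀, ⟨?_, ?_, ?_⟩, ?_, ?_, ?_, ?_⟩
  · exact (extCont d L hL g₀ hhom hlip).continuousOn
  · intro m z
    have h := valueD d L hL g₀ hhom hlip m 1 z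
    simpa using h
  · intro c t hc ht η
    exact extHom d L hL g₀ hhom hlip c hc t ht η
  · -- uniqueness
    rintro g' ⟨hcont, hext, hhomg⟩ t ht η
    have hD : ∀ (n m : ℕ+) (z : Fin d → ℤ),
        g' ((n:ℝ)/(m:ℝ)) (fun i => (z i:ℝ)/(m:ℝ)) = g₀ n z / (m:ℝ) := by
      intro n m z
      have hmp : (0:ℝ) < (m:ℝ) := by exact_mod_cast m.pos
      have hnp : (0:ℝ) < (n:ℝ) := by exact_mod_cast n.pos
      have h := hhomg ((m:ℝ)⁻¹) (n:ℝ) (inv_pos.mpr hmp) hnp (fun i => (z i:ℝ))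
      rw [hext n z] at h
      have e1 : (m:ℝ)⁻¹ * (n:ℝ) = (n:ℝ)/(m:ℝ) := by rw [inv_mul_eq_div]
      have e2 : ((m:ℝ)⁻¹ • fun i => (z i:ℝ)) = fun i => (z i:ℝ)/(m:ℝ) := by
        funext i
        simp [Pi.smul_apply, smul_eq_mul, div_eq_inv_mul]
      rw [e1, e2] at h
      rw [h, inv_mul_eq_div]
    have key : ∀ ε > 0, |g' t η - extFun d L g₀ t η| ≤ 2*ε := by
      intro ε hε
      have hcw : ContinuousWithinAt (fun p : ℝ × (Fin d → ℝ) => g' p.1 p.2)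
          {p : ℝ × (Fin d → ℝ) | 0 < p.1} (t, η) := hcont (t, η) ht
      rw [Metric.continuousWithinAt_iff] at hcw
      obtain ⟨δ, hδp, hδ⟩ := hcw ε hε
      obtain ⟨m, hm⟩ := exists_pnat_gt (max (max (1/t) (2/δ)) (L*((d:ℝ)+1)/ε))
      have hmp : (0:ℝ) < (m:ℝ) := by exact_mod_cast m.pos
      have h1t : 1 ≤ t * (m:ℝ) := by
        have h := lt_of_le_of_lt ((le_max_left (1/t) (2/δ)).trans (le_max_left _ _)) hm
        rw [div_lt_iff₀ ht] at h
        nlinarith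
      obtain ⟨n, hn⟩ := approxT t m h1t
      obtain ⟨z, hz⟩ := approxZ d η m
      have hnmp : (0:ℝ) < (n:ℝ)/(m:ℝ) := by
        have : (0:ℝ) < (n:ℝ) := by exact_mod_cast n.pos
        positivity
      have hinvm : 1/(m:ℝ) < δ := by
        have h := lt_of_le_of_lt ((le_max_right (1/t) (2/δ)).trans (le_max_left _ _)) hm
        rw [div_lt_iff₀ hδp] at h
        rw [div_lt_iff₀ hmp]
        nlinarith
      have hptS : (((n:ℝ)/(m:ℝ), fun i => (z i:ℝ)/(m:ℝ)) : ℝ × (Fin d → ℝ))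
          ∈ {p : ℝ × (Fin d → ℝ) | 0 < p.1} := hnmp
      have hdist : dist ((((n:ℝ)/(m:ℝ), fun i => (z i:ℝ)/(m:ℝ))) : ℝ × (Fin d → ℝ))
          (t, η) < δ := by
        rw [Prod.dist_eq]
        apply max_lt
        · rw [Real.dist_eq, abs_sub_comm]
          exact lt_of_le_of_lt hn hinvm
        · apply lt_of_le_of_lt _ hinvm
          rw [dist_pi_le_iff (by positivity)]
          intro i
          rw [Real.dist_eq, abs_sub_comm]
          exact hz i
      have h2 := hδ hptS hdist
      rw [Real.dist_eq] at h2
      have hg'pt := hD n m z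
      have hFpt := valueD d L hL g₀ hhom hlip n m z
      have h3 := extLip d L hL g₀ hhom hlip t ((n:ℝ)/(m:ℝ)) η (fun i => (z i:ℝ)/(m:ℝ))
      rw [hFpt] at h3
      have hδb := deltaBound d t η m ((n:ℝ)/(m:ℝ)) (fun i => (z i:ℝ)/(m:ℝ)) hn hz
      have h4 : L * (((d:ℝ)+1)/(m:ℝ)) ≤ ε := by
        have h := lt_of_le_of_lt (le_max_right (max (1/t) (2/δ)) (L*((d:ℝ)+1)/ε)) hm
        rw [div_lt_iff₀ hε] at h
        rw [show L * (((d:ℝ)+1)/(m:ℝ)) = (L*((d:ℝ)+1))/(m:ℝ) by ring, div_le_iff₀ hmp]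
        nlinarith
      have h5 : |extFun d L g₀ t η - g₀ n z / (m:ℝ)| ≤ ε :=
        le_trans (le_trans h3 (mul_le_mul_of_nonneg_left hδb hL.le)) h4
      have htri := abs_sub_le (g' t η) (g₀ n z / (m:ℝ)) (extFun d L g₀ t η)
      have h6 : |g' t η - g₀ n z / (m:ℝ)| ≤ ε := by
        rw [← hg'pt, abs_sub_comm]
        exact h2.le
      have h7 : |g₀ n z / (m:ℝ) - extFun d L g₀ t η| ≤ ε := by
        rw [abs_sub_comm]
        exact h5
      linarith
    have h0 : |g' t η - extFun d L g₀ t η| ≤ 0 := by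
      apply le_of_forall_pos_le_add
      intro ε hε
      have h := key (ε/2) (half_pos hε)
      linarith
    exact sub_eq_zero.mp (abs_eq_zero.mp (le_antisymm h0 (abs_nonneg _)))
  · intro t t' ht ht' η η'
    exact extLip d L hL g₀ hhom hlip t t' η η'
  · intro t ht η
    have h := extHom d L hL g₀ hhom hlip t ht 1 one_pos (t⁻¹ • η)
    rw [mul_one] at h
    rw [← h]
    congr 1
    rw [smul_smul, mul_inv_cancel₀ (ne_of_gt ht), one_smul]
  · intro hsub
    refine ⟨convex_univ, ?_⟩
    intro x _ y _ a b ha hb hab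
    rcases eq_or_lt_of_le ha with ha0 | hap
    · have ha' : a = 0 := ha0.symm
      subst ha'
      have hb1 : b = 1 := by linarith
      subst hb1
      simp
    · rcases eq_or_lt_of_le hb with hb0 | hbp
      · have hb' : b = 0 := hb0.symm
        subst hb'
        have ha1 : a = 1 := by linarith
        subst ha1
        simp
      · have key := extSubadd d L hL g₀ hhom hlip hsub a b hap hbp (a • x) (b • y)
        rw [hab] at key
        have e1 : extFun d L g₀ a (a • x) = a * extFun d L g₀ 1 x := by
          have h := extHom d L hL g₀ hhom hlip a hap 1 one_pos x
          rwa [mul_one] at h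
        have e2 : extFun d L g₀ b (b • y) = b * extFun d L g₀ 1 y := by
          have h := extHom d L hL g₀ hhom hlip b hbp 1 one_pos y
          rwa [mul_one] at h
        rw [e1, e2] at key
        simpa [smul_eq_mul] using key
end

section
/- Let d ≥ 1, let z ∈ ℝ^d satisfy |z|₁ < 1, and let α : 𝕍 → (0, ∞) be a strictly positive function on the set 𝕍 of unit vectors. Then there exists a unique constant C > 0 such that (1/2) · Σ_{e∈𝕍} sqrt( ⟨z,e⟩² + 4·C·α(e)·α(−e) ) = 1. Moreover, setting u(e) := (1/2) · ( ⟨z,e⟩ + sqrt( ⟨z,e⟩² + 4·C·α(e)·α(−e) ) ) for e ∈ 𝕍, one has: u(e) > 0 for every e ∈ 𝕍, Σ_{e∈𝕍} u(e) = 1, and Σ_{e∈𝕍} u(e)·e = z; that is, (u(e))_{e∈𝕍} is a strictly positive probability vector on 𝕍 whose mean equals z. -/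
namespace Stmt8Aux

variable {d : ℕ}

def P (i : Fin d) : Fin d → ℤ := fun j => if j = i then 1 else 0
def N (i : Fin d) : Fin d → ℤ := fun j => if j = i then -1 else 0

lemma negP (i : Fin d) : -P i = N i := by
  funext j
  by_cases h : j = i <;> simp [P, N, h]

lemma negN (i : Fin d) : -N i = P i := by
  funext j
  by_cases h : j = i <;> simp [P, N, h]

lemma P_inj : Function.Injective (P (d := d)) := by
  intro i i' h
  by_contra hne
  have := congrFun h i
  simp [P, hne] at this

lemma N_inj : Function.Injective (N (d := d)) := by
  intro i i' h
  by_contra hne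
  have := congrFun h i
  simp [N, hne] at this

lemma mem_unitVecs {e : Fin d → ℤ} :
    e ∈ unitVecs d ↔ (∃ i, e = P i) ∨ (∃ i, e = N i) := by
  unfold unitVecs
  simp only [Finset.mem_union, Finset.mem_image, Finset.mem_univ, true_and]
  constructor
  · rintro (⟨i, rfl⟩ | ⟨i, rfl⟩)
    · exact Or.inl ⟨i, rfl⟩
    · exact Or.inr ⟨i, rfl⟩
  · rintro (⟨i, rfl⟩ | ⟨i, rfl⟩)
    · exact Or.inl ⟨i, rfl⟩
    · exact Or.inr ⟨i, rfl⟩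

lemma neg_mem {e : Fin d → ℤ} (he : e ∈ unitVecs d) : -e ∈ unitVecs d := by
  rcases mem_unitVecs.1 he with ⟨i, rfl⟩ | ⟨i, rfl⟩
  · rw [negP]; exact mem_unitVecs.2 (Or.inr ⟨i, rfl⟩)
  · rw [negN]; exact mem_unitVecs.2 (Or.inl ⟨i, rfl⟩)

lemma disj : Disjoint (Finset.univ.image (P (d := d))) (Finset.univ.image (N (d := d))) := by
  rw [Finset.disjoint_left]
  rintro e he hn
  simp only [Finset.mem_image, Finset.mem_univ, true_and] at he hn
  obtain ⟨i, rfl⟩ := he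
  obtain ⟨i', hi'⟩ := hn
  have h := congrFun hi' i'
  simp only [P, N] at h
  rcases eq_or_ne i' i with rfl | hne
  · simp at h
  · simp [hne] at h

lemma sum_unitVecs (g : (Fin d → ℤ) → ℝ) :
    ∑ e ∈ unitVecs d, g e = ∑ i, g (P i) + ∑ i, g (N i) := by
  have h : unitVecs d = Finset.univ.image (P (d := d)) ∪ Finset.univ.image (N (d := d)) := rfl
  rw [h, Finset.sum_union disj,
    Finset.sum_image (fun x _ y _ hxy => P_inj hxy),
    Finset.sum_image (fun x _ y _ hxy => N_inj hxy)]

lemma innerP (z : Fin d → ℝ) (k : Fin d) : ∑ i, z i * ((P k i : ℤ) : ℝ) = z k := by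
  simp [P, apply_ite (fun (n : ℤ) => (n : ℝ)), mul_ite, Finset.sum_ite_eq']

lemma innerN (z : Fin d → ℝ) (k : Fin d) : ∑ i, z i * ((N k i : ℤ) : ℝ) = -z k := by
  simp [N, apply_ite (fun (n : ℤ) => (n : ℝ)), mul_ite, Finset.sum_ite_eq']

noncomputable def s (z : Fin d → ℝ) (α : (Fin d → ℤ) → ℝ) (C : ℝ) (i : Fin d) : ℝ :=
  Real.sqrt ((z i) ^ 2 + 4 * C * (α (P i) * α (N i)))

noncomputable def F (z : Fin d → ℝ) (α : (Fin d → ℤ) → ℝ) (C : ℝ) : ℝ := ∑ i, s z α C i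

end Stmt8Aux

open Stmt8Aux in
theorem stmt8 (d : ℕ) (hd : 1 ≤ d) (z : Fin d → ℝ) (hz : ∑ i, |z i| < 1)
    (α : (Fin d → ℤ) → ℝ) (hα : ∀ e ∈ unitVecs d, 0 < α e) :
    (∃! C : ℝ, 0 < C ∧
      (1 / 2) * ∑ e ∈ unitVecs d,
        Real.sqrt ((∑ i, z i * (e i : ℝ)) ^ 2 + 4 * C * α e * α (-e)) = 1) ∧
    (∀ C : ℝ, 0 < C →
      (1 / 2) * ∑ e ∈ unitVecs d,
        Real.sqrt ((∑ i, z i * (e i : ℝ)) ^ 2 + 4 * C * α e * α (-e)) = 1 →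
      -- `u(e) > 0` for every unit vector `e`
      (∀ e ∈ unitVecs d,
        0 < (1 / 2) * ((∑ i, z i * (e i : ℝ)) +
          Real.sqrt ((∑ i, z i * (e i : ℝ)) ^ 2 + 4 * C * α e * α (-e)))) ∧
      -- `u` is a probability vector
      (∑ e ∈ unitVecs d, (1 / 2) * ((∑ i, z i * (e i : ℝ)) +
          Real.sqrt ((∑ i, z i * (e i : ℝ)) ^ 2 + 4 * C * α e * α (-e))) = 1) ∧
      -- the mean of `u` is `z`
      (∀ j : Fin d, ∑ e ∈ unitVecs d, (1 / 2) * ((∑ i, z i * (e i : ℝ)) +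
          Real.sqrt ((∑ i, z i * (e i : ℝ)) ^ 2 + 4 * C * α e * α (-e))) * (e j : ℝ)
        = z j)) := by
  have hnonempty : Nonempty (Fin d) := ⟨⟨0, hd⟩⟩
  have hP : ∀ i : Fin d, P i ∈ unitVecs d := fun i => mem_unitVecs.2 (Or.inl ⟨i, rfl⟩)
  have hN : ∀ i : Fin d, N i ∈ unitVecs d := fun i => mem_unitVecs.2 (Or.inr ⟨i, rfl⟩)
  have ha : ∀ i : Fin d, 0 < α (P i) * α (N i) := fun i => mul_pos (hα _ (hP i)) (hα _ (hN i))
  -- rewriting the main sum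
  have h1 : ∀ C : ℝ, ∀ k : Fin d,
      Real.sqrt ((z k) ^ 2 + 4 * C * α (P k) * α (-P k)) = s z α C k := by
    intro C k
    rw [negP]
    simp only [s]
    congr 1
    ring
  have h2 : ∀ C : ℝ, ∀ k : Fin d,
      Real.sqrt ((-z k) ^ 2 + 4 * C * α (N k) * α (-N k)) = s z α C k := by
    intro C k
    rw [negN]
    simp only [s]
    congr 1
    ring
  have key : ∀ C : ℝ,
      (1 / 2) * ∑ e ∈ unitVecs d,
        Real.sqrt ((∑ i, z i * (e i : ℝ)) ^ 2 + 4 * C * α e * α (-e)) = F z α C := by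
    intro C
    rw [sum_unitVecs]
    simp only [innerP, innerN, h1, h2, F]
    ring
  -- analytic facts about F
  have hmono : StrictMonoOn (F z α) (Set.Ici 0) := by
    intro x hx y hy hxy
    simp only [Set.mem_Ici] at hx hy
    apply Finset.sum_lt_sum_of_nonempty Finset.univ_nonempty
    intro i _
    apply Real.sqrt_lt_sqrt
    · nlinarith [sq_nonneg (z i), ha i]
    · nlinarith [ha i]
  have hcont : Continuous (F z α) := by
    apply continuous_finset_sum
    intro i _
    exact Real.continuous_sqrt.comp (by continuity)
  have hF0 : F z α 0 = ∑ i, |z i| := by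
    simp [F, s, Real.sqrt_sq_eq_abs]
  -- a value where F is at least 1
  set i0 : Fin d := ⟨0, hd⟩ with hi0
  set M : ℝ := 1 / (4 * (α (P i0) * α (N i0))) with hM
  have hane : 0 < 4 * (α (P i0) * α (N i0)) := by nlinarith [ha i0]
  have hMpos : 0 < M := by
    rw [hM]; exact div_pos one_pos hane
  have hFM : 1 ≤ F z α M := by
    have honeterm : 1 ≤ s z α M i0 := by
      have harg : (1 : ℝ) ≤ (z i0) ^ 2 + 4 * M * (α (P i0) * α (N i0)) := by
        have h4 : 4 * M * (α (P i0) * α (N i0)) = 1 := by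
          rw [hM]
          field_simp
          exact div_self (ha i0).ne'
        nlinarith [sq_nonneg (z i0)]
      calc (1 : ℝ) = Real.sqrt 1 := Real.sqrt_one.symm
        _ ≤ s z α M i0 := Real.sqrt_le_sqrt harg
    calc (1 : ℝ) ≤ s z α M i0 := honeterm
      _ ≤ F z α M := Finset.single_le_sum (f := fun i => s z α M i)
          (fun i _ => Real.sqrt_nonneg _) (Finset.mem_univ i0)
  -- existence of C via IVT
  obtain ⟨C, hCmem, hFC⟩ := intermediate_value_Icc hMpos.le hcont.continuousOn
    ⟨hF0 ▸ hz.le, hFM⟩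
  have hCpos : 0 < C := by
    rcases (hCmem.1).lt_or_eq with h | h
    · exact h
    · exfalso
      rw [← h] at hFC
      rw [hF0] at hFC
      linarith
  constructor
  · -- existence and uniqueness
    refine ⟨C, ⟨hCpos, by rw [key]; exact hFC⟩, ?_⟩
    rintro C' ⟨hC'pos, hC'eq⟩
    rw [key] at hC'eq
    exact hmono.injOn (Set.mem_Ici.2 hC'pos.le) (Set.mem_Ici.2 hCpos.le)
      (hC'eq.trans hFC.symm)
  · -- properties of u
    intro C hC hCeq
    rw [key] at hCeq
    have hFC1 : ∑ k, s z α C k = 1 := hCeq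
    refine ⟨?_, ?_, ?_⟩
    · -- positivity
      intro e he
      have h1e := hα e he
      have h2e := hα _ (neg_mem he)
      set t := ∑ i, z i * ((e i : ℤ) : ℝ) with ht
      have hp : 0 < 4 * C * α e * α (-e) := by positivity
      have hlt : Real.sqrt (t ^ 2) < Real.sqrt (t ^ 2 + 4 * C * α e * α (-e)) :=
        Real.sqrt_lt_sqrt (sq_nonneg t) (by linarith)
      rw [Real.sqrt_sq_eq_abs] at hlt
      have habs := neg_abs_le t
      linarith
    · -- probability vector
      rw [sum_unitVecs]
      simp only [innerP, innerN, h1, h2]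
      rw [← Finset.sum_add_distrib]
      exact (Finset.sum_congr rfl fun k _ => by ring).trans hFC1
    · -- mean
      intro j
      rw [sum_unitVecs]
      have e1 : ∀ k : Fin d, (1 / 2 : ℝ) * ((∑ i, z i * ((P k i : ℤ) : ℝ)) +
            Real.sqrt ((∑ i, z i * ((P k i : ℤ) : ℝ)) ^ 2 + 4 * C * α (P k) * α (-P k)))
            * ((P k j : ℤ) : ℝ)
          = if j = k then 1 / 2 * (z k + s z α C k) else 0 := by
        intro k
        rw [innerP, h1]
        simp only [P]
        by_cases h : j = k
        · subst h; simp
        · simp [h]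
      have e2 : ∀ k : Fin d, (1 / 2 : ℝ) * ((∑ i, z i * ((N k i : ℤ) : ℝ)) +
            Real.sqrt ((∑ i, z i * ((N k i : ℤ) : ℝ)) ^ 2 + 4 * C * α (N k) * α (-N k)))
            * ((N k j : ℤ) : ℝ)
          = if j = k then -(1 / 2 * (-z k + s z α C k)) else 0 := by
        intro k
        rw [innerN, h2]
        simp only [N]
        by_cases h : j = k
        · subst h; simp
        · simp [h]
      simp only [e1, e2, Finset.sum_ite_eq, Finset.mem_univ, if_pos]
      ring
end

section
/- Let m ≥ 1, M > 0, and let (f_n)_{n≥1} be a sequence of differentiable functions f_n : ℝ^m → ℝ such that each gradient ∇f_n : ℝ^m → ℝ^m is M-Lipschitz, and suppose f_n converges pointwise on ℝ^m to a function f. Then: f is differentiable on ℝ^m, ∇f is M-Lipschitz, ∇f_n(x) → ∇f(x) for every x ∈ ℝ^m, and the convergence ∇f_n → ∇f is uniform on every compact subset of ℝ^m. -/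
open Filter InnerProductSpace

local notation "⟪" x ", " y "⟫" => @inner ℝ _ _ x y

lemma stmt15_quad {E : Type*} [NormedAddCommGroup E] [InnerProductSpace ℝ E] [CompleteSpace E]
    (M : NNReal) {φ : E → ℝ} (hdiff : Differentiable ℝ φ)
    (hlip : LipschitzWith M (fun x => gradient φ x)) (x y : E) :
    |φ y - φ x - ⟪gradient φ x, y - x⟫| ≤ M * (‖y - x‖ * ‖y - x‖) := by
  have key : ∀ z : E, fderiv ℝ φ z = toDual ℝ E (gradient φ z) := fun z =>
    ((toDual ℝ E).apply_symm_apply _).symm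
  have hball : Convex ℝ (Metric.closedBall x ‖y - x‖) := convex_closedBall _ _
  have bound : ∀ z ∈ Metric.closedBall x ‖y - x‖,
      ‖fderiv ℝ φ z - fderiv ℝ φ x‖ ≤ (M : ℝ) * ‖y - x‖ := by
    intro z hz
    rw [key z, key x, ← map_sub, (toDual ℝ E).norm_map]
    calc ‖gradient φ z - gradient φ x‖ = dist (gradient φ z) (gradient φ x) := by
          rw [dist_eq_norm]
      _ ≤ (M : ℝ) * dist z x := hlip.dist_le_mul z x
      _ ≤ (M : ℝ) * ‖y - x‖ := by
          gcongr
          exact Metric.mem_closedBall.mp hz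
  have := hball.norm_image_sub_le_of_norm_fderiv_le'
    (fun z _ => hdiff z) bound (Metric.mem_closedBall_self (norm_nonneg _))
    (Metric.mem_closedBall.mpr (by rw [dist_eq_norm]))
  have h2 : (fderiv ℝ φ x) (y - x) = ⟪gradient φ x, y - x⟫ := by
    rw [key x]; simp
  rw [h2] at this
  calc |φ y - φ x - ⟪gradient φ x, y - x⟫| = ‖φ y - φ x - ⟪gradient φ x, y - x⟫‖ := rfl
    _ ≤ (M : ℝ) * ‖y - x‖ * ‖y - x‖ := this
    _ = (M : ℝ) * (‖y - x‖ * ‖y - x‖) := by ring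

lemma stmt15_ptwise (m : ℕ) (M : NNReal)
    (f : ℕ → EuclideanSpace ℝ (Fin m) → ℝ) (F : EuclideanSpace ℝ (Fin m) → ℝ)
    (quad : ∀ n (x y : EuclideanSpace ℝ (Fin m)),
      |f n y - f n x - ⟪gradient (f n) x, y - x⟫| ≤ M * (‖y - x‖ * ‖y - x‖))
    (hconv : ∀ x, Tendsto (fun n => f n x) atTop (nhds (F x)))
    (x : EuclideanSpace ℝ (Fin m)) :
    ∃ Gx, Tendsto (fun n => gradient (f n) x) atTop (nhds Gx) := by
  have coord : ∀ i : Fin m, ∃ l : ℝ,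
      Tendsto (fun n => gradient (f n) x i) atTop (nhds l) := by
    intro i
    apply cauchySeq_tendsto_of_complete
    rw [Metric.cauchySeq_iff]
    intro ε hε
    set v : EuclideanSpace ℝ (Fin m) := EuclideanSpace.single i (1 : ℝ) with hv
    have hvnorm : ‖v‖ = 1 := by simp [hv]
    set t : ℝ := ε / (4 * M + 4) with htdef
    have hM4 : (0 : ℝ) < 4 * M + 4 := by positivity
    have ht : 0 < t := div_pos hε hM4
    have htε : t * (4 * M + 4) = ε := div_mul_cancel₀ _ hM4.ne'
    set y := x + t • v with hy
    have hyx : y - x = t • v := by rw [hy]; abel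
    have hyxnorm : ‖y - x‖ = t := by
      rw [hyx, norm_smul, hvnorm, mul_one, Real.norm_eq_abs, abs_of_pos ht]
    have hd : CauchySeq (fun n => f n y - f n x) := ((hconv y).sub (hconv x)).cauchySeq
    rw [Metric.cauchySeq_iff] at hd
    obtain ⟨N, hN⟩ := hd (t * ε / 2) (by positivity)
    refine ⟨N, fun p hp q hq => ?_⟩
    have hinner : ∀ n, ⟪gradient (f n) x, y - x⟫ = t * gradient (f n) x i := by
      intro n
      rw [hyx, real_inner_smul_right, hv, EuclideanSpace.inner_single_right]
      simp
    have hquad : ∀ n, |f n y - f n x - t * gradient (f n) x i| ≤ M * (t * t) := by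
      intro n
      have := quad n x y
      rwa [hinner n, hyxnorm] at this
    have hdpq := hN p hp q hq
    rw [Real.dist_eq] at hdpq ⊢
    have key : t * |gradient (f p) x i - gradient (f q) x i| < t * ε := by
      have expand : t * gradient (f p) x i - t * gradient (f q) x i =
          ((f p y - f p x) - (f q y - f q x))
          - (f p y - f p x - t * gradient (f p) x i)
          + (f q y - f q x - t * gradient (f q) x i) := by ring
      calc t * |gradient (f p) x i - gradient (f q) x i|
          = |t * gradient (f p) x i - t * gradient (f q) x i| := by
            rw [show t * gradient (f p) x i - t * gradient (f q) x i
              = t * (gradient (f p) x i - gradient (f q) x i) by ring, abs_mul, abs_of_pos ht]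
        _ ≤ |(f p y - f p x) - (f q y - f q x)|
            + |f p y - f p x - t * gradient (f p) x i|
            + |f q y - f q x - t * gradient (f q) x i| := by
            rw [expand]
            refine (abs_add_le _ _).trans (add_le_add_left ?_ _)
            exact (abs_sub _ _)
        _ ≤ t * ε / 2 + M * (t * t) + M * (t * t) :=
            add_le_add (add_le_add hdpq.le (hquad p)) (hquad q)
        _ < t * ε := by nlinarith [ht, htε, hε]
    exact lt_of_mul_lt_mul_left key ht.le
  choose L hL using coord
  exact ⟨WithLp.toLp 2 L, by
    have := ((PiLp.continuous_toLp 2 (fun _ : Fin m => ℝ)).tendsto L).comp (tendsto_pi_nhds.mpr hL)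
    exact this⟩

theorem stmt15 (m : ℕ) (hm : 1 ≤ m) (M : NNReal) (hM : 0 < M)
    (f : ℕ → EuclideanSpace ℝ (Fin m) → ℝ) (F : EuclideanSpace ℝ (Fin m) → ℝ)
    (hdiff : ∀ n, Differentiable ℝ (f n))
    (hlip : ∀ n, LipschitzWith M (fun x => gradient (f n) x))
    (hconv : ∀ x, Tendsto (fun n => f n x) atTop (nhds (F x))) :
    Differentiable ℝ F ∧
    LipschitzWith M (fun x => gradient F x) ∧
    (∀ x, Tendsto (fun n => gradient (f n) x) atTop (nhds (gradient F x))) ∧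
    ∀ K : Set (EuclideanSpace ℝ (Fin m)), IsCompact K →
      TendstoUniformlyOn (fun n x => gradient (f n) x) (fun x => gradient F x) atTop K := by
  have quad : ∀ n (x y : EuclideanSpace ℝ (Fin m)),
      |f n y - f n x - ⟪gradient (f n) x, y - x⟫| ≤ M * (‖y - x‖ * ‖y - x‖) :=
    fun n => stmt15_quad M (hdiff n) (hlip n)
  obtain ⟨G, hG⟩ := Classical.axiomOfChoice (stmt15_ptwise m M f F quad hconv)
  -- G is M-Lipschitz
  have hGlip : LipschitzWith M G := by
    apply LipschitzWith.of_dist_le_mul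
    intro x y
    refine le_of_tendsto ((hG x).dist (hG y)) (Eventually.of_forall fun n => ?_)
    exact (hlip n).dist_le_mul x y
  -- quadratic bound for F
  have quadF : ∀ x y, |F y - F x - ⟪G x, y - x⟫| ≤ M * (‖y - x‖ * ‖y - x‖) := by
    intro x y
    have hten : Tendsto (fun n => f n y - f n x - ⟪gradient (f n) x, y - x⟫) atTop
        (nhds (F y - F x - ⟪G x, y - x⟫)) :=
      ((hconv y).sub (hconv x)).sub ((hG x).inner tendsto_const_nhds)
    exact le_of_tendsto hten.abs (Eventually.of_forall fun n => quad n x y)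
  -- F has gradient G
  have hFgrad : ∀ x, HasGradientAt F (G x) x := by
    intro x
    rw [hasGradientAt_iff_isLittleO, Asymptotics.isLittleO_iff]
    intro c hc
    have hMpos : (0 : ℝ) < M := hM
    have hball : Metric.ball x (c / M) ∈ nhds x := Metric.ball_mem_nhds x (by positivity)
    filter_upwards [hball] with y hy
    have hdist : ‖y - x‖ < c / M := by rwa [← dist_eq_norm, ← Metric.mem_ball]
    have h1 : |F y - F x - ⟪G x, y - x⟫| ≤ M * (‖y - x‖ * ‖y - x‖) := quadF x y
    have h2 : (M : ℝ) * (‖y - x‖ * ‖y - x‖) ≤ c * ‖y - x‖ := by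
      rcases eq_or_lt_of_le (norm_nonneg (y - x)) with h | h
      · rw [← h]; ring_nf; rfl
      · have : (M : ℝ) * ‖y - x‖ ≤ c := by
          rw [← le_div_iff₀' hMpos]; exact hdist.le
        nlinarith
    calc ‖F y - F x - ⟪G x, y - x⟫‖ = |F y - F x - ⟪G x, y - x⟫| := rfl
      _ ≤ c * ‖y - x‖ := h1.trans h2
      _ = c * ‖(fun x' => x' - x) y‖ := rfl
  have hGF : ∀ x, gradient F x = G x := fun x => (hFgrad x).gradient
  have hFdiff : Differentiable ℝ F := fun x => (hFgrad x).differentiableAt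
  have hGfun : (fun x => gradient F x) = G := funext hGF
  refine ⟨hFdiff, by rw [hGfun]; exact hGlip, fun x => by rw [hGF x]; exact hG x, ?_⟩
  -- uniform convergence on compacts
  intro K hK
  rw [tendstoUniformlyOn_iff_tendstoUniformly_comp_coe]
  haveI : CompactSpace K := isCompact_iff_compactSpace.mp hK
  have equi : Equicontinuous (fun n (k : K) => gradient (f n) ↑k) := by
    apply Metric.equicontinuous_of_continuity_modulus (fun d => M * d)
    · have : Tendsto (fun d : ℝ => (M : ℝ) * d) (nhds 0) (nhds ((M : ℝ) * 0)) :=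
        (continuous_const.mul continuous_id).tendsto 0
      simpa using this
    · intro a b n
      have := (hlip n).dist_le_mul (a : EuclideanSpace ℝ (Fin m)) b
      simpa [Subtype.dist_eq] using this
  have h1 : Tendsto (fun n (k : K) => gradient (f n) ↑k) atTop
      (nhds fun k : K => gradient F ↑k) := by
    apply tendsto_pi_nhds.mpr
    intro k
    rw [hGF ↑k]
    exact hG ↑k
  have h2 := (equi.tendsto_uniformFun_iff_pi atTop (fun k : K => gradient F ↑k)).mpr h1
  exact UniformFun.tendsto_iff_tendstoUniformly.mp h2
end

section
/- Let d ≥ 1 and let f : ℝ^d → ℝ ∪ {+∞} be a convex, lower semicontinuous function that is finite at every point of the closed ℓ¹-unit ball 𝔻 := {x ∈ ℝ^d : |x|₁ ≤ 1}. Then the restriction of f to 𝔻 is continuous (with respect to the subspace topology of 𝔻), including at boundary points of 𝔻. -/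
open Finset Filter Topology

theorem stmt16 (d : ℕ) (hd : 1 ≤ d) (f : (Fin d → ℝ) → EReal)
    -- `f` takes values in `ℝ ∪ {+∞}`
    (hnotbot : ∀ x, f x ≠ ⊥)
    -- convexity
    (hconv : ∀ x y : Fin d → ℝ, ∀ θ : ℝ, 0 ≤ θ → θ ≤ 1 →
      f (θ • x + (1 - θ) • y) ≤ ((θ : ℝ) : EReal) * f x + (((1 - θ : ℝ)) : EReal) * f y)
    -- lower semicontinuity: sublevel sets are closed
    (hlsc : ∀ a : ℝ, IsClosed {x | f x ≤ ((a : ℝ) : EReal)})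
    -- finiteness on the closed ℓ¹-unit ball
    (hfin : ∀ x : Fin d → ℝ, ∑ i, |x i| ≤ 1 → f x ≠ ⊤) :
    ContinuousOn f {x : Fin d → ℝ | ∑ i, |x i| ≤ 1} := by
  set D : Set (Fin d → ℝ) := {x : Fin d → ℝ | ∑ i, |x i| ≤ 1} with hDdef
  set g : (Fin d → ℝ) → ℝ := fun x => (f x).toReal with hg
  have hD' : ∀ x : Fin d → ℝ, x ∈ D ↔ ∑ i, |x i| ≤ 1 := fun x => Iff.rfl
  have hfg : ∀ x ∈ D, f x = ((g x : ℝ) : EReal) := fun x hx =>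
    (EReal.coe_toReal (hfin x hx) (hnotbot x)).symm
  -- D is convex
  have hDconv : Convex ℝ D := by
    intro x hx y hy a b ha hb hab
    rw [hD'] at hx hy ⊢
    calc ∑ i, |(a • x + b • y) i| ≤ ∑ i, (a * |x i| + b * |y i|) := by
          apply Finset.sum_le_sum; intro i _
          simp only [Pi.add_apply, Pi.smul_apply, smul_eq_mul]
          calc |a * x i + b * y i| ≤ |a * x i| + |b * y i| := abs_add_le _ _
            _ = a * |x i| + b * |y i| := by
                rw [abs_mul, abs_mul, abs_of_nonneg ha, abs_of_nonneg hb]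
      _ = a * ∑ i, |x i| + b * ∑ i, |y i| := by
          rw [Finset.sum_add_distrib, Finset.mul_sum, Finset.mul_sum]
      _ ≤ a * 1 + b * 1 := by gcongr
      _ = 1 := by linarith
  -- g is convex on D
  have hgconv : ConvexOn ℝ D g := by
    refine ⟨hDconv, ?_⟩
    intro x hx y hy a b ha hb hab
    have b1 : b = 1 - a := by linarith
    subst b1
    have h := hconv x y a ha (by linarith)
    rw [hfg x hx, hfg y hy] at h
    have hc : ((a:ℝ):EReal) * ((g x : ℝ):EReal) + (((1-a:ℝ)):EReal) * ((g y:ℝ):EReal)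
        = (((a * g x + (1-a) * g y : ℝ)) : EReal) := by norm_cast
    rw [hc] at h
    have h2 := EReal.toReal_le_toReal h (hnotbot _) (EReal.coe_ne_top _)
    rw [EReal.toReal_coe] at h2; exact h2
  -- upper bound B on D
  have hd0 : (0:ℝ) < d := by exact_mod_cast hd
  have hFin : Nonempty (Fin d) := ⟨⟨0, hd⟩⟩
  obtain ⟨B, hB⟩ : ∃ B : ℝ, ∀ z ∈ D, g z ≤ B := by
    refine ⟨max (g 0) (Finset.univ.sup' (univ_nonempty) fun i =>
      max (g (Pi.single i 1)) (g (-Pi.single i 1))), ?_⟩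
    intro z hz
    rw [hD'] at hz
    set w : Option (Fin d) → ℝ := fun o => o.elim (1 - ∑ i, |z i|) (fun i => |z i|) with hw
    set p : Option (Fin d) → (Fin d → ℝ) := fun o =>
      o.elim 0 (fun i => if 0 ≤ z i then Pi.single i 1 else -Pi.single i 1) with hp
    have hw0 : ∀ o ∈ Finset.univ, 0 ≤ w o := by
      rintro (_|i) _
      · simpa [hw] using hz
      · simp [hw]
    have hw1 : ∑ o, w o = 1 := by
      rw [Fintype.sum_option]
      simp [hw]
    have hpD : ∀ o ∈ Finset.univ, p o ∈ D := by
      rintro (_|i) _ <;> rw [hD']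
      · simp [hp]
      · by_cases h : 0 ≤ z i <;>
          simp [hp, h, Pi.single_apply, apply_ite abs, Finset.sum_ite_eq']
    have hcomb : ∑ o, w o • p o = z := by
      rw [Fintype.sum_option]
      have : ∀ i, w (some i) • p (some i) = Pi.single i (z i) := by
        intro i
        by_cases h : 0 ≤ z i
        · simp [hw, hp, h, abs_of_nonneg h, ← Pi.single_smul, smul_eq_mul]
        · push_neg at h
          simp only [hw, hp, if_neg (not_le.2 h), Option.elim, smul_neg,
            ← Pi.single_smul, smul_eq_mul, mul_one]
          rw [abs_of_neg h]
          funext j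
          by_cases hj : j = i <;> simp [Pi.single_apply, hj]
      simp only [this]
      simp [hw, hp, Finset.univ_sum_single]
    have := hgconv.map_sum_le hw0 hw1 hpD
    rw [hcomb] at this
    refine this.trans ?_
    calc ∑ o, w o * g (p o)
        ≤ ∑ o, w o * (max (g 0) (Finset.univ.sup' (univ_nonempty) fun i =>
            max (g (Pi.single i 1)) (g (-Pi.single i 1)))) := by
          apply Finset.sum_le_sum
          rintro (_|i) _
          · exact mul_le_mul_of_nonneg_left (le_max_left _ _) (hw0 none (mem_univ _))
          · refine mul_le_mul_of_nonneg_left ?_ (hw0 (some i) (mem_univ _))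
            refine le_trans ?_ (le_max_right _ _)
            refine le_trans ?_ (Finset.le_sup' _ (mem_univ i))
            by_cases h : 0 ≤ z i <;> simp [hp, h, le_max_left, le_max_right]
      _ = 1 * _ := by rw [← Finset.sum_mul, hw1]
      _ = _ := one_mul _
  -- main continuity argument
  intro x hx
  have hxD : ∑ i, |x i| ≤ 1 := hx
  have hgxB : g x ≤ B := hB x hx
  -- sign vectors
  set e : (Fin d → Bool) → (Fin d → ℝ) := fun s i => if s i then 1 else -1 with he
  have hdot_le : ∀ (s) (y : Fin d → ℝ), ∑ i, e s i * y i ≤ ∑ i, |y i| := by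
    intro s y
    apply Finset.sum_le_sum
    intro i _
    have h1 : |e s i| = 1 := by by_cases h : s i <;> simp [he, h]
    calc e s i * y i ≤ |e s i * y i| := le_abs_self _
      _ = |y i| := by rw [abs_mul, h1, one_mul]
  have hdot_abs : ∀ y : Fin d → ℝ, ∑ i, |y i| = ∑ i, e (fun i => decide (0 ≤ y i)) i * y i := by
    intro y
    apply Finset.sum_congr rfl
    intro i _
    by_cases h : 0 ≤ y i
    · simp [he, h, abs_of_nonneg h]
    · push_neg at h
      simp [he, not_le.2 h, abs_of_neg h]
  set T : Finset (Fin d → Bool) := Finset.univ.filter (fun s => ∑ i, e s i * x i ≠ 1) with hT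
  have hTne : T.Nonempty := by
    by_contra h
    rw [Finset.not_nonempty_iff_eq_empty, Finset.filter_eq_empty_iff] at h
    have h1 : ∀ s, ∑ i, e s i * x i = 1 := by
      intro s; have := h (Finset.mem_univ s); simpa using this
    have hs0 := h1 (fun _ => true)
    have hs1 := h1 (fun _ => false)
    have : ∑ i, e (fun _ => false) i * x i = -∑ i, e (fun _ => true) i * x i := by
      rw [← Finset.sum_neg_distrib]
      apply Finset.sum_congr rfl
      intro i _
      simp [he]
    rw [hs0, hs1] at this
    linarith
  set δ : ℝ := T.inf' hTne (fun s => 1 - ∑ i, e s i * x i) with hδ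
  have hδpos : 0 < δ := by
    rw [hδ, Finset.lt_inf'_iff]
    intro s hs
    rw [hT, Finset.mem_filter] at hs
    have h1 : ∑ i, e s i * x i ≤ 1 := (hdot_le s x).trans hxD
    have := lt_of_le_of_ne h1 hs.2
    linarith
  have hδkey : ∀ s, ∑ i, e s i * x i = 1 ∨ ∑ i, e s i * x i ≤ 1 - δ := by
    intro s
    by_cases h : ∑ i, e s i * x i = 1
    · exact Or.inl h
    · right
      have : δ ≤ 1 - ∑ i, e s i * x i :=
        Finset.inf'_le _ (Finset.mem_filter.2 ⟨Finset.mem_univ s, h⟩)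
      linarith
  -- main estimate
  have hmain : ∀ y ∈ D, ∑ i, |y i - x i| ≤ δ →
      g y ≤ g x + (∑ i, |y i - x i|) / δ * (B - g x) := by
    intro y hy hn
    rcases eq_or_ne y x with rfl | hne
    · simp
    set n : ℝ := ∑ i, |y i - x i| with hnn
    have hnpos : 0 < n := by
      rw [hnn]
      rcases Function.ne_iff.1 hne with ⟨i, hi⟩
      have : 0 < |y i - x i| := abs_pos.2 (sub_ne_zero.2 hi)
      calc (0:ℝ) < |y i - x i| := this
        _ ≤ ∑ i, |y i - x i| := Finset.single_le_sum (f := fun j => |y j - x j|) (fun j _ => abs_nonneg _) (mem_univ i)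
    set t : ℝ := n / δ with ht
    have htpos : 0 < t := div_pos hnpos hδpos
    have ht1 : t ≤ 1 := by rw [ht]; exact div_le_one_of_le₀ hn hδpos.le
    set z : Fin d → ℝ := x + t⁻¹ • (y - x) with hz
    have hzD : z ∈ D := by
      rw [hD']
      rw [hdot_abs z]
      set s₀ : Fin d → Bool := fun i => decide (0 ≤ z i) with hs₀
      have hsplit : ∑ i, e s₀ i * z i
          = ∑ i, e s₀ i * x i + t⁻¹ * ∑ i, e s₀ i * (y i - x i) := by
        rw [Finset.mul_sum, ← Finset.sum_add_distrib]
        apply Finset.sum_congr rfl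
        intro i _
        simp only [hz, Pi.add_apply, Pi.smul_apply, Pi.sub_apply, smul_eq_mul]
        ring
      rw [hsplit]
      have hey : ∑ i, e s₀ i * y i ≤ 1 := (hdot_le s₀ y).trans hy
      have heyx : ∑ i, e s₀ i * (y i - x i)
          = ∑ i, e s₀ i * y i - ∑ i, e s₀ i * x i := by
        rw [← Finset.sum_sub_distrib]
        apply Finset.sum_congr rfl
        intro i _; ring
      rcases hδkey s₀ with h1 | h1
      · have : ∑ i, e s₀ i * (y i - x i) ≤ 0 := by rw [heyx, h1]; linarith
        have h2 : t⁻¹ * ∑ i, e s₀ i * (y i - x i) ≤ 0 :=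
          mul_nonpos_of_nonneg_of_nonpos (inv_nonneg.2 htpos.le) this
        linarith
      · have h2 : ∑ i, e s₀ i * (y i - x i) ≤ n := by
          refine le_trans ?_ (le_of_eq rfl)
          calc ∑ i, e s₀ i * (y i - x i) ≤ ∑ i, |y i - x i| := by
                have := hdot_le s₀ (y - x)
                simpa using this
            _ = n := rfl
        have h3 : t⁻¹ * ∑ i, e s₀ i * (y i - x i) ≤ t⁻¹ * n :=
          mul_le_mul_of_nonneg_left h2 (inv_nonneg.2 htpos.le)
        have h4 : t⁻¹ * n = δ := by
          rw [ht]; field_simp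
        linarith
    have hy_comb : y = t • z + (1 - t) • x := by
      funext i
      simp only [hz, Pi.add_apply, Pi.smul_apply, Pi.sub_apply, smul_eq_mul]
      field_simp
      ring
    have := hgconv.2 hzD hx htpos.le (by linarith : (0:ℝ) ≤ 1 - t) (by ring)
    rw [← hy_comb] at this
    have hgz : g z ≤ B := hB z hzD
    calc g y ≤ t * g z + (1 - t) * g x := this
      _ ≤ t * B + (1 - t) * g x := by nlinarith
      _ = g x + t * (B - g x) := by ring
  -- conclude continuity within D at x
  have hgten : Tendsto g (𝓝[D] x) (𝓝 (g x)) := by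
    rw [Metric.tendsto_nhdsWithin_nhds]
    intro ε hε
    -- lower bound from lsc
    have hUopen : IsOpen {y | f y ≤ ((g x - ε : ℝ) : EReal)}ᶜ := (hlsc (g x - ε)).isOpen_compl
    have hxU : x ∈ {y | f y ≤ ((g x - ε : ℝ) : EReal)}ᶜ := by
      simp only [Set.mem_compl_iff, Set.mem_setOf_eq, not_le]
      rw [hfg x hx]
      exact_mod_cast (by linarith : g x - ε < g x)
    obtain ⟨η₁, hη₁pos, hη₁⟩ := Metric.isOpen_iff.1 hUopen x hxU
    set η₂ : ℝ := min (δ / d) (δ * ε / (d * (B - g x + 1))) with hη₂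
    have hη₂pos : 0 < η₂ := by
      apply lt_min
      · positivity
      · apply div_pos (by positivity)
        nlinarith
    refine ⟨min η₁ η₂, lt_min hη₁pos hη₂pos, ?_⟩
    intro y hy hdist
    have hd1 : dist y x < η₁ := lt_of_lt_of_le hdist (min_le_left _ _)
    have hd2 : dist y x < η₂ := lt_of_lt_of_le hdist (min_le_right _ _)
    -- lower bound
    have hlow : g x - ε < g y := by
      have hyU := hη₁ hd1
      simp only [Set.mem_compl_iff, Set.mem_setOf_eq, not_le] at hyU
      rw [hfg y hy] at hyU
      exact_mod_cast hyU
    -- upper bound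
    have hnsum : ∑ i, |y i - x i| ≤ d * dist y x := by
      calc ∑ i, |y i - x i| ≤ ∑ _i : Fin d, dist y x := by
            apply Finset.sum_le_sum
            intro i _
            rw [← Real.dist_eq]
            exact dist_le_pi_dist y x i
        _ = d * dist y x := by simp [Finset.sum_const, nsmul_eq_mul]
    have hnδ : ∑ i, |y i - x i| ≤ δ := by
      have : d * dist y x ≤ d * η₂ := by
        apply mul_le_mul_of_nonneg_left hd2.le hd0.le
      have h2 : (d:ℝ) * η₂ ≤ δ := by
        calc (d:ℝ) * η₂ ≤ d * (δ / d) := by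
              apply mul_le_mul_of_nonneg_left (min_le_left _ _) hd0.le
          _ = δ := by field_simp
      linarith
    have hup := hmain y hy hnδ
    have hupp : g y < g x + ε := by
      have hBx : 0 ≤ B - g x := by linarith
      have h5 : (∑ i, |y i - x i|) / δ * (B - g x) < ε := by
        have h6 : ∑ i, |y i - x i| ≤ d * η₂ := by
          have : d * dist y x ≤ d * η₂ := mul_le_mul_of_nonneg_left hd2.le hd0.le
          linarith
        have h7 : (d:ℝ) * η₂ ≤ d * (δ * ε / (d * (B - g x + 1))) :=
          mul_le_mul_of_nonneg_left (min_le_right _ _) hd0.le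
        have h8 : (d:ℝ) * (δ * ε / (d * (B - g x + 1))) = δ * ε / (B - g x + 1) := by
          field_simp
        have h9 : (∑ i, |y i - x i|) / δ * (B - g x)
            ≤ (δ * ε / (B - g x + 1)) / δ * (B - g x) := by
          have : (∑ i, |y i - x i|) ≤ δ * ε / (B - g x + 1) := by linarith
          gcongr
        have h10 : (δ * ε / (B - g x + 1)) / δ * (B - g x) < ε := by
          have hb1 : (0:ℝ) < B - g x + 1 := by linarith
          have hE : (δ * ε / (B - g x + 1)) / δ = ε / (B - g x + 1) := by
            field_simp
          rw [hE, div_mul_eq_mul_div, div_lt_iff₀ hb1]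
          nlinarith
        linarith
      linarith
    rw [Real.dist_eq, abs_lt]
    constructor <;> linarith
  have hcoe : Tendsto (fun y => ((g y : ℝ) : EReal)) (𝓝[D] x) (𝓝 ((g x : ℝ) : EReal)) :=
    (continuous_coe_real_ereal.tendsto _).comp hgten
  have : ContinuousWithinAt f D x := by
    unfold ContinuousWithinAt
    rw [hfg x hx]
    apply hcoe.congr'
    filter_upwards [self_mem_nhdsWithin] with y hy
    exact (hfg y hy).symm
  exact this
end
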